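/- arXiv:1903.08059 — 9 statements merged into one kernel-verified Lean document; each statement's English description precedes it below -/
import Mathlib

section
/- For any finite simple graph G on n vertices and any integer s ≥ 2, (s² − 1)·k_{s+1}(G)·k_{s−1}(G) ≥ k_s(G)·(s²·k_s(G) − n·k_{s−1}(G)). Equivalently, when k_s(G) and k_{s−1}(G) are positive, k_{s+1}(G)/k_s(G) ≥ (1/(s²−1))·(s²·k_s(G)/k_{s−1}(G) − n). -/
open SimpleGraph

section MoonMoserAux

open Finset

variable {n : ℕ} (G : SimpleGraph (Fin n)) [DecidableRel G.Adj]

/-- common neighbors of a finset -/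
def cN (T : Finset (Fin n)) : Finset (Fin n) :=
  Finset.univ.filter (fun v => ∀ u ∈ T, G.Adj v u)

lemma mem_cN {T : Finset (Fin n)} {v : Fin n} :
    v ∈ cN G T ↔ ∀ u ∈ T, G.Adj v u := by
  simp [cN]

lemma not_mem_of_mem_cN {T : Finset (Fin n)} {v : Fin n}
    (hv : v ∈ cN G T) : v ∉ T := by
  intro hvT
  exact G.loopless.irrefl v ((mem_cN G).1 hv v hvT)

omit [DecidableRel G.Adj] in
lemma erase_isNClique {S : Finset (Fin n)} {m : ℕ} (hS : G.IsNClique (m + 1) S)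
    {v : Fin n} (hv : v ∈ S) : G.IsNClique m (S.erase v) :=
  ⟨hS.1.subset (erase_subset _ _), by rw [card_erase_of_mem hv, hS.2]; rfl⟩

lemma mem_cN_erase {S : Finset (Fin n)} {m : ℕ} (hS : G.IsNClique m S)
    {v : Fin n} (hv : v ∈ S) : v ∈ cN G (S.erase v) := by
  rw [mem_cN]
  intro u hu
  rw [mem_erase] at hu
  exact hS.1 hv hu.2 (Ne.symm hu.1)

/-- Lemma A -/
lemma sum_cN_card (t : ℕ) :
    ∑ T ∈ G.cliqueFinset t, (cN G T).card = (t + 1) * (G.cliqueFinset (t + 1)).card := by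
  have hR : (t + 1) * (G.cliqueFinset (t + 1)).card
      = ((G.cliqueFinset (t + 1)).sigma (fun S => S)).card := by
    rw [Finset.card_sigma]
    rw [Finset.sum_congr rfl (fun S hS => (mem_cliqueFinset_iff.1 hS).2), Finset.sum_const,
      smul_eq_mul, mul_comm]
  rw [hR, ← Finset.card_sigma]
  apply Finset.card_bij' (fun p _ => (⟨insert p.2 p.1, p.2⟩ : Σ _ : Finset (Fin n), Fin n))
    (fun p _ => (⟨p.1.erase p.2, p.2⟩ : Σ _ : Finset (Fin n), Fin n))
  · rintro ⟨T, v⟩ hp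
    rw [Finset.mem_sigma] at hp ⊢
    obtain ⟨hT, hv⟩ := hp
    rw [mem_cliqueFinset_iff] at hT ⊢
    exact ⟨hT.insert (fun b hb => (mem_cN G).1 hv b hb), Finset.mem_insert_self _ _⟩
  · rintro ⟨S, v⟩ hp
    rw [Finset.mem_sigma] at hp ⊢
    obtain ⟨hS, hv⟩ := hp
    rw [mem_cliqueFinset_iff] at hS ⊢
    exact ⟨erase_isNClique G hS hv, mem_cN_erase G hS hv⟩
  · rintro ⟨T, v⟩ hp
    rw [Finset.mem_sigma] at hp
    have hvT : v ∉ T := not_mem_of_mem_cN G hp.2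
    simp [Finset.erase_insert hvT]
  · rintro ⟨S, v⟩ hp
    rw [Finset.mem_sigma] at hp
    simp [Finset.insert_erase hp.2]

lemma cN_anti {T T' : Finset (Fin n)} (h : T' ⊆ T) : cN G T ⊆ cN G T' := by
  intro v hv
  rw [mem_cN] at hv ⊢
  exact fun u hu => hv u (h hu)

/-- bad vertices for a clique S -/
def bad (S : Finset (Fin n)) : Finset (Fin n) :=
  Finset.univ.filter (fun v => v ∉ S ∧ v ∉ cN G S)

lemma count_partition (m : ℕ) :
    n * (G.cliqueFinset m).card
      = m * (G.cliqueFinset m).card + (∑ S ∈ G.cliqueFinset m, (cN G S).card)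
        + ∑ S ∈ G.cliqueFinset m, (bad G S).card := by
  have key : ∀ S ∈ G.cliqueFinset m, n = m + ((cN G S).card + (bad G S).card) := by
    intro S hS
    rw [mem_cliqueFinset_iff] at hS
    have hdisj1 : Disjoint (cN G S) (bad G S) := by
      rw [Finset.disjoint_left]
      intro v hv hv'
      rw [bad, Finset.mem_filter] at hv'
      exact hv'.2.2 hv
    have hdisj2 : Disjoint S (cN G S ∪ bad G S) := by
      rw [Finset.disjoint_left]
      intro v hv hv'
      rw [Finset.mem_union] at hv'
      rcases hv' with hv' | hv'
      · exact G.loopless.irrefl v ((mem_cN G).1 hv' v hv)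
      · rw [bad, Finset.mem_filter] at hv'
        exact hv'.2.1 hv
    have hu : S ∪ (cN G S ∪ bad G S) = Finset.univ := by
      ext v
      simp only [Finset.mem_union, Finset.mem_univ, iff_true, bad, Finset.mem_filter]
      tauto
    calc n = (Finset.univ : Finset (Fin n)).card := by
            rw [Finset.card_univ, Fintype.card_fin]
      _ = (S ∪ (cN G S ∪ bad G S)).card := by rw [hu]
      _ = m + ((cN G S).card + (bad G S).card) := by
            rw [Finset.card_union_of_disjoint hdisj2, Finset.card_union_of_disjoint hdisj1,
              hS.2]
  calc n * (G.cliqueFinset m).card = ∑ _S ∈ G.cliqueFinset m, n := by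
        rw [Finset.sum_const, smul_eq_mul, mul_comm]
    _ = ∑ S ∈ G.cliqueFinset m, (m + ((cN G S).card + (bad G S).card)) :=
        Finset.sum_congr rfl key
    _ = m * (G.cliqueFinset m).card + (∑ S ∈ G.cliqueFinset m, (cN G S).card)
        + ∑ S ∈ G.cliqueFinset m, (bad G S).card := by
        rw [Finset.sum_add_distrib, Finset.sum_add_distrib, Finset.sum_const, smul_eq_mul,
          mul_comm, add_assoc]

/-- adjacent ordered pairs of common neighbors count (t+2)-cliques -/
lemma sum_adj_pairs (t : ℕ) :
    ∑ T ∈ G.cliqueFinset t, ((cN G T).offDiag.filter (fun p => G.Adj p.1 p.2)).card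
      = (t + 2) * (t + 1) * (G.cliqueFinset (t + 2)).card := by
  have hR : (t + 2) * (t + 1) * (G.cliqueFinset (t + 2)).card
      = ((G.cliqueFinset (t + 2)).sigma (fun S => S.offDiag)).card := by
    rw [Finset.card_sigma]
    have : ∀ S ∈ G.cliqueFinset (t + 2), S.offDiag.card = (t + 2) * (t + 1) := by
      intro S hS
      rw [Finset.offDiag_card, (mem_cliqueFinset_iff.1 hS).2]
      ring_nf
      omega
    rw [Finset.sum_congr rfl this, Finset.sum_const, smul_eq_mul, mul_comm]
  rw [hR, ← Finset.card_sigma]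
  apply Finset.card_bij'
    (fun p _ => (⟨insert p.2.1 (insert p.2.2 p.1), p.2⟩ :
      Σ _ : Finset (Fin n), Fin n × Fin n))
    (fun p _ => (⟨(p.1.erase p.2.1).erase p.2.2, p.2⟩ :
      Σ _ : Finset (Fin n), Fin n × Fin n))
  · rintro ⟨T, u, w⟩ hp
    rw [Finset.mem_sigma] at hp ⊢
    obtain ⟨hT, hp2⟩ := hp
    rw [Finset.mem_filter, Finset.mem_offDiag] at hp2
    obtain ⟨⟨hu, hw, huw⟩, hadj⟩ := hp2
    rw [mem_cliqueFinset_iff] at hT ⊢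
    have h1 : G.IsNClique (t + 1) (insert w T) :=
      hT.insert (fun b hb => (mem_cN G).1 hw b hb)
    have h2 : G.IsNClique (t + 2) (insert u (insert w T)) := by
      apply h1.insert
      intro b hb
      rcases Finset.mem_insert.1 hb with rfl | hb
      · exact hadj
      · exact (mem_cN G).1 hu b hb
    refine ⟨h2, Finset.mem_offDiag.2 ⟨?_, ?_, huw⟩⟩
    · exact Finset.mem_insert_self _ _
    · exact Finset.mem_insert_of_mem (Finset.mem_insert_self _ _)
  · rintro ⟨S, u, w⟩ hp
    rw [Finset.mem_sigma] at hp ⊢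
    obtain ⟨hS, hp2⟩ := hp
    rw [Finset.mem_offDiag] at hp2
    obtain ⟨hu, hw, huw⟩ := hp2
    rw [mem_cliqueFinset_iff] at hS ⊢
    have hwu : w ∈ S.erase u := Finset.mem_erase.2 ⟨fun h => huw h.symm, hw⟩
    refine ⟨erase_isNClique G (erase_isNClique G hS hu) hwu, ?_⟩
    rw [Finset.mem_filter, Finset.mem_offDiag]
    refine ⟨⟨?_, ?_, huw⟩, hS.1 hu hw huw⟩
    · exact cN_anti G (Finset.erase_subset _ _) (mem_cN_erase G hS hu)
    · have : w ∈ cN G (S.erase w) := mem_cN_erase G hS hw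
      apply cN_anti G _ this
      rw [Finset.erase_right_comm]
      exact Finset.erase_subset _ _
  · rintro ⟨T, u, w⟩ hp
    rw [Finset.mem_sigma] at hp
    obtain ⟨hT, hp2⟩ := hp
    rw [Finset.mem_filter, Finset.mem_offDiag] at hp2
    obtain ⟨⟨hu, hw, huw⟩, _⟩ := hp2
    have huT : u ∉ insert w T :=
      fun h => (Finset.mem_insert.1 h).elim huw (not_mem_of_mem_cN G hu)
    simp [Finset.erase_insert huT, Finset.erase_insert (not_mem_of_mem_cN G hw)]
  · rintro ⟨S, u, w⟩ hp
    rw [Finset.mem_sigma] at hp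
    obtain ⟨hS, hp2⟩ := hp
    rw [Finset.mem_offDiag] at hp2
    obtain ⟨hu, hw, huw⟩ := hp2
    have hwu : w ∈ S.erase u := Finset.mem_erase.2 ⟨fun h => huw h.symm, hw⟩
    simp [Finset.insert_erase hwu, Finset.insert_erase hu]

/-- non-adjacent pairs inject into bad pairs one level up -/
lemma nonadj_pairs_le (t : ℕ) :
    ∑ T ∈ G.cliqueFinset t, ((cN G T).offDiag.filter (fun p => ¬ G.Adj p.1 p.2)).card
      ≤ ∑ S ∈ G.cliqueFinset (t + 1), (bad G S).card := by
  rw [← Finset.card_sigma, ← Finset.card_sigma]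
  apply Finset.card_le_card_of_injOn
    (fun p => (⟨insert p.2.1 p.1, p.2.2⟩ : Σ _ : Finset (Fin n), Fin n))
  · rintro ⟨T, u, w⟩ hp
    rw [Finset.mem_coe, Finset.mem_sigma] at hp
    rw [Finset.mem_coe, Finset.mem_sigma]
    obtain ⟨hT, hp2⟩ := hp
    rw [Finset.mem_filter, Finset.mem_offDiag] at hp2
    obtain ⟨⟨hu, hw, huw⟩, hnadj⟩ := hp2
    rw [mem_cliqueFinset_iff] at hT ⊢
    refine ⟨hT.insert (fun b hb => (mem_cN G).1 hu b hb), ?_⟩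
    rw [bad, Finset.mem_filter]
    refine ⟨Finset.mem_univ _, ?_, ?_⟩
    · intro h
      rcases Finset.mem_insert.1 h with h' | h'
      · exact huw h'.symm
      · exact not_mem_of_mem_cN G hw h'
    · intro h
      exact hnadj (((mem_cN G).1 h u (Finset.mem_insert_self _ _)).symm)
  · rintro ⟨T, u, w⟩ hp ⟨T', u', w'⟩ hp' heq
    dsimp only at *
    simp only [Finset.mem_coe, Finset.mem_sigma, Finset.mem_filter,
      Finset.mem_offDiag] at hp hp'
    obtain ⟨hT, ⟨hu, hw, huw⟩, hnadj⟩ := hp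
    obtain ⟨hT', ⟨hu', hw', hu'w'⟩, hnadj'⟩ := hp'
    have hins : insert u T = insert u' T' :=
      congrArg (fun x : (Σ _ : Finset (Fin n), Fin n) => x.1) heq
    have hww : w = w' :=
      congrArg (fun x : (Σ _ : Finset (Fin n), Fin n) => x.2) heq
    subst hww
    have huu : u = u' := by
      have hmem : u' ∈ insert u T := hins ▸ Finset.mem_insert_self u' T'
      rcases Finset.mem_insert.1 hmem with h | h
      · exact h.symm
      · exact absurd ((mem_cN G).1 hw u' h) (fun hadj => hnadj' (hadj.symm))
    subst huu
    have hTT : T = T' := by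
      have h1 : (insert u T).erase u = T :=
        Finset.erase_insert (not_mem_of_mem_cN G hu)
      have h2 : (insert u T').erase u = T' :=
        Finset.erase_insert (not_mem_of_mem_cN G hu')
      rw [← h1, ← h2, hins]
    subst hTT
    rfl

end MoonMoserAux

section
open Finset in
private theorem moon_moser' (G : SimpleGraph (Fin n)) [DecidableRel G.Adj]
    (s : ℕ) (hs : 2 ≤ s) :
    ((G.cliqueFinset s).card : ℝ) *
        ((s : ℝ) ^ 2 * ((G.cliqueFinset s).card : ℝ)
          - (n : ℝ) * ((G.cliqueFinset (s - 1)).card : ℝ))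
      ≤ ((s : ℝ) ^ 2 - 1) * ((G.cliqueFinset (s + 1)).card : ℝ)
          * ((G.cliqueFinset (s - 1)).card : ℝ) := by
  obtain ⟨u, rfl⟩ : ∃ u, s = u + 2 := ⟨s - 2, by omega⟩
  have hs1 : u + 2 - 1 = u + 1 := rfl
  rw [hs1]
  set t := u + 1 with ht
  -- notation
  set k₀ := (G.cliqueFinset t).card with hk₀
  set k₁ := (G.cliqueFinset (t + 1)).card with hk₁
  set k₂ := (G.cliqueFinset (t + 2)).card with hk₂
  have hA : ∑ T ∈ G.cliqueFinset t, (cN G T).card = (t + 1) * k₁ := sum_cN_card G t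
  have hA2 : ∑ S ∈ G.cliqueFinset (t + 1), (cN G S).card = (t + 2) * k₂ :=
    sum_cN_card G (t + 1)
  have hB1 : ∑ T ∈ G.cliqueFinset t,
      ((cN G T).offDiag.filter (fun p => G.Adj p.1 p.2)).card = (t + 2) * (t + 1) * k₂ :=
    sum_adj_pairs G t
  have hB2 := nonadj_pairs_le G t
  have hC := count_partition G (t + 1)
  rw [hA2] at hC
  -- split the sum of squares
  have hsplit : ∑ T ∈ G.cliqueFinset t, (cN G T).card ^ 2
      = (∑ T ∈ G.cliqueFinset t,
          ((cN G T).offDiag.filter (fun p => G.Adj p.1 p.2)).card)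
        + (∑ T ∈ G.cliqueFinset t,
          ((cN G T).offDiag.filter (fun p => ¬ G.Adj p.1 p.2)).card)
        + ∑ T ∈ G.cliqueFinset t, (cN G T).card := by
    rw [← Finset.sum_add_distrib, ← Finset.sum_add_distrib]
    apply Finset.sum_congr rfl
    intro T _
    have h1 : ((cN G T).offDiag.filter (fun p => G.Adj p.1 p.2)).card
        + ((cN G T).offDiag.filter (fun p => ¬ G.Adj p.1 p.2)).card
        = (cN G T).offDiag.card :=
      Finset.card_filter_add_card_filter_not _
    have h2 : (cN G T).offDiag.card = (cN G T).card * (cN G T).card - (cN G T).card :=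
      Finset.offDiag_card _
    have h3 : (cN G T).card ≤ (cN G T).card * (cN G T).card := by nlinarith
    rw [pow_two]
    omega
  -- the natural-number bound on the sum of squares
  have hS2 : (∑ T ∈ G.cliqueFinset t, (cN G T).card ^ 2) + (t + 2) * k₂
      ≤ (t + 2) * (t + 1) * k₂ + n * k₁ := by
    rw [hsplit, hA, hB1]
    rw [← hk₁] at hC
    linarith [hB2, hC]
  -- Cauchy–Schwarz
  have hCS := sq_sum_le_card_mul_sum_sq (s := G.cliqueFinset t)
    (f := fun T => ((cN G T).card : ℝ))
  have hAr : ∑ T ∈ G.cliqueFinset t, ((cN G T).card : ℝ) = ((t : ℝ) + 1) * (k₁ : ℝ) := by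
    exact_mod_cast congrArg (Nat.cast : ℕ → ℝ) hA
  have hSr : ∑ T ∈ G.cliqueFinset t, ((cN G T).card : ℝ) ^ 2
      = ((∑ T ∈ G.cliqueFinset t, (cN G T).card ^ 2 : ℕ) : ℝ) := by
    push_cast
    rfl
  rw [hAr, hSr, ← hk₀] at hCS
  have hS2r : ((∑ T ∈ G.cliqueFinset t, (cN G T).card ^ 2 : ℕ) : ℝ) + ((t : ℝ) + 2) * (k₂ : ℝ)
      ≤ ((t : ℝ) + 2) * ((t : ℝ) + 1) * (k₂ : ℝ) + (n : ℝ) * (k₁ : ℝ) := by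
    exact_mod_cast hS2
  have hk0 : (0 : ℝ) ≤ (k₀ : ℝ) := Nat.cast_nonneg _
  have htr : (t : ℝ) = (u : ℝ) + 1 := by rw [ht]; push_cast; ring
  rw [htr] at hCS hS2r
  have h5 : ((∑ T ∈ G.cliqueFinset t, (cN G T).card ^ 2 : ℕ) : ℝ)
      ≤ ((u : ℝ) + 3) * ((u : ℝ) + 2) * (k₂ : ℝ) + (n : ℝ) * (k₁ : ℝ)
        - ((u : ℝ) + 3) * (k₂ : ℝ) := by linarith
  have h6 := mul_le_mul_of_nonneg_left h5 hk0
  push_cast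
  nlinarith [hCS, h6]

end

/-- The Moon–Moser inequality. -/
theorem moon_moser (n : ℕ) (G : SimpleGraph (Fin n)) [DecidableRel G.Adj]
    (s : ℕ) (hs : 2 ≤ s) :
    ((G.cliqueFinset s).card : ℝ) *
        ((s : ℝ) ^ 2 * ((G.cliqueFinset s).card : ℝ)
          - (n : ℝ) * ((G.cliqueFinset (s - 1)).card : ℝ))
      ≤ ((s : ℝ) ^ 2 - 1) * ((G.cliqueFinset (s + 1)).card : ℝ)
          * ((G.cliqueFinset (s - 1)).card : ℝ) :=
  moon_moser' G s hs
end

section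
/- Let r, t, n be integers with 1 ≤ r ≤ n and t ≥ 1. If G is a graph on n vertices with maximum degree at most r (equivalently, G contains no copy of the star S_{r+1} = K_{1,r+1}), then k_t(G) ≤ (n/t)·C(r, t−1) = (n/(r+1))·C(r+1, t). -/
open SimpleGraph

/-- The theorem of Wood and of Engbers–Galvin: an `S_{r+1}`-free graph
(max degree at most `r`) on `n` vertices has at most `(n/t)·C(r,t-1)`
copies of `K_t`, and `(n/t)·C(r,t-1) = (n/(r+1))·C(r+1,t)`. -/
theorem wood_engbers_galvin (r t n : ℕ) (hr : 1 ≤ r) (hrn : r ≤ n) (ht : 1 ≤ t)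
    (G : SimpleGraph (Fin n)) [DecidableRel G.Adj]
    (hdeg : ∀ v, G.degree v ≤ r) :
    ((G.cliqueFinset t).card : ℝ) ≤ ((n : ℝ) / t) * (r.choose (t - 1) : ℝ) ∧
      ((n : ℝ) / t) * (r.choose (t - 1) : ℝ)
        = ((n : ℝ) / (r + 1)) * ((r + 1).choose t : ℝ) := by
  classical
  have fiber : ∀ v : Fin n,
      ((G.cliqueFinset t).filter (fun s => v ∈ s)).card ≤ r.choose (t - 1) := by
    intro v
    have h1 : ((G.cliqueFinset t).filter (fun s => v ∈ s)).card ≤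
        ((G.neighborFinset v).powersetCard (t - 1)).card := by
      apply Finset.card_le_card_of_injOn (fun s => s.erase v)
      · intro s hs
        simp only [Finset.mem_coe, Finset.mem_filter, mem_cliqueFinset_iff] at hs
        obtain ⟨⟨hclique, hcard⟩, hv⟩ := hs
        rw [Finset.mem_coe, Finset.mem_powersetCard]
        constructor
        · intro u hu
          rw [mem_neighborFinset]
          exact hclique hv (Finset.mem_of_mem_erase hu)
            (Finset.ne_of_mem_erase hu).symm
        · rw [Finset.card_erase_of_mem hv, hcard]
      · intro s₁ h₁ s₂ h₂ h
        simp only [Finset.coe_filter, Set.mem_setOf_eq] at h₁ h₂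
        have := congrArg (insert v) h
        rwa [Finset.insert_erase h₁.2, Finset.insert_erase h₂.2] at this
    have h2 : ((G.neighborFinset v).powersetCard (t - 1)).card =
        (G.degree v).choose (t - 1) := by
      rw [Finset.card_powersetCard, card_neighborFinset_eq_degree]
    exact h1.trans (by rw [h2]; exact Nat.choose_le_choose _ (hdeg v))
  have key : t * (G.cliqueFinset t).card ≤ n * r.choose (t - 1) := by
    have hsum : ∑ s ∈ G.cliqueFinset t, s.card =
        ∑ v : Fin n, ((G.cliqueFinset t).filter (fun s => v ∈ s)).card := by
      simp_rw [Finset.card_filter]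
      rw [Finset.sum_comm]
      refine Finset.sum_congr rfl fun s _ => ?_
      rw [← Finset.card_filter, Finset.filter_univ_mem]
    calc t * (G.cliqueFinset t).card = ∑ s ∈ G.cliqueFinset t, s.card := by
          rw [Finset.sum_congr rfl fun s hs => (mem_cliqueFinset_iff.mp hs).2,
            Finset.sum_const, smul_eq_mul, mul_comm]
      _ = ∑ v : Fin n, ((G.cliqueFinset t).filter (fun s => v ∈ s)).card := hsum
      _ ≤ ∑ _v : Fin n, r.choose (t - 1) := Finset.sum_le_sum fun v _ => fiber v
      _ = n * r.choose (t - 1) := by simp [mul_comm]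
  have ht0 : (0:ℝ) < t := by exact_mod_cast ht
  constructor
  · rw [div_mul_eq_mul_div, le_div_iff₀ ht0]
    calc ((G.cliqueFinset t).card : ℝ) * t = (t * (G.cliqueFinset t).card : ℕ) := by
          push_cast; ring
      _ ≤ ((n * r.choose (t - 1) : ℕ) : ℝ) := by exact_mod_cast key
      _ = (n : ℝ) * r.choose (t - 1) := by push_cast; ring
  · have hid : (r + 1) * r.choose (t - 1) = (r + 1).choose t * t := by
      have h := Nat.add_one_mul_choose_eq r (t - 1)
      have h2 : t - 1 + 1 = t := by omega
      simp only [Nat.succ_eq_add_one, h2] at h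
      exact h
    have hr1 : (0:ℝ) < (r:ℝ) + 1 := by positivity
    field_simp
    have : ((r:ℝ) + 1) * r.choose (t - 1) = (r + 1).choose t * t := by
      exact_mod_cast hid
    nlinarith [this]
end

section
/- Let r and t be integers with 2 ≤ t ≤ r. For every ε > 0 there exists δ > 0 (depending only on ε, r, t) such that for every n, if G is a graph on n vertices with k_t(G) ≥ (1 + ε)·(n/(r+1))·C(r+1, t), then s_{r+1}(G) ≥ δ·n. -/
open SimpleGraph Finset

-- per-vertex: cliques of size t containing v are at most C(d(v), t-1)
lemma clique_fiber_le {n t : ℕ} (ht : 1 ≤ t) (G : SimpleGraph (Fin n)) [DecidableRel G.Adj]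
    (v : Fin n) :
    ((G.cliqueFinset t).filter (fun s => v ∈ s)).card ≤ (G.degree v).choose (t - 1) := by
  classical
  have : ((G.cliqueFinset t).filter (fun s => v ∈ s)).card
      ≤ ((G.neighborFinset v).powersetCard (t - 1)).card := by
    apply Finset.card_le_card_of_injOn (fun s => s.erase v)
    · intro s hs
      simp only [Finset.mem_coe, Finset.mem_filter, SimpleGraph.mem_cliqueFinset_iff] at hs
      obtain ⟨⟨hclique, hcard⟩, hv⟩ := hs
      rw [Finset.mem_coe, Finset.mem_powersetCard]
      constructor
      · intro u hu
        rw [Finset.mem_erase] at hu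
        rw [SimpleGraph.mem_neighborFinset]
        exact hclique hv (Finset.mem_of_mem_erase (Finset.mem_erase.mpr hu)) (Ne.symm hu.1)
      · rw [Finset.card_erase_of_mem hv, hcard]
    · intro s hs s' hs' hee
      simp only [Finset.coe_filter, Set.mem_setOf_eq] at hs hs'
      have h1 : insert v (s.erase v) = s := Finset.insert_erase hs.2
      have h2 : insert v (s'.erase v) = s' := Finset.insert_erase hs'.2
      rw [← h1, ← h2]
      exact congrArg (insert v) hee
  simpa [Finset.card_powersetCard, SimpleGraph.card_neighborFinset_eq_degree] using this

lemma clique_count_le {n t : ℕ} (ht : 1 ≤ t) (G : SimpleGraph (Fin n)) [DecidableRel G.Adj] :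
    t * (G.cliqueFinset t).card ≤ ∑ v, (G.degree v).choose (t - 1) := by
  classical
  have h1 : t * (G.cliqueFinset t).card = ∑ s ∈ G.cliqueFinset t, s.card := by
    rw [Finset.sum_congr rfl (fun s hs => ((SimpleGraph.mem_cliqueFinset_iff.mp hs).2 : s.card = t))]
    rw [Finset.sum_const, smul_eq_mul, mul_comm]
  have h2 : ∑ s ∈ G.cliqueFinset t, s.card
      = ∑ v, ((G.cliqueFinset t).filter (fun s => v ∈ s)).card := by
    simp only [Finset.card_filter]
    rw [Finset.sum_comm]
    refine Finset.sum_congr rfl fun s _ => ?_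
    rw [← Finset.card_filter]
    congr 1
    ext u
    simp
  rw [h1, h2]
  exact Finset.sum_le_sum fun v _ => clique_fiber_le ht G v

lemma choose_key {r t d : ℕ} (ht : 1 ≤ t) (htr : t ≤ r) :
    d.choose (t - 1) ≤ r.choose (t - 1) + (r + 1).choose (t - 1) * d.choose (r + 1) := by
  rcases le_or_gt d r with hd | hd
  · calc d.choose (t-1) ≤ r.choose (t-1) := Nat.choose_le_choose _ hd
      _ ≤ _ := Nat.le_add_right _ _
  · have hdr : r + 1 ≤ d := hd
    have hts : t - 1 ≤ r + 1 := by omega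
    have key := Nat.choose_mul (n := d) hts
    have hpos : 0 < (d - (t - 1)).choose (r + 1 - (t - 1)) :=
      Nat.choose_pos (by omega)
    calc d.choose (t - 1) ≤ d.choose (t - 1) * (d - (t - 1)).choose (r + 1 - (t - 1)) :=
          Nat.le_mul_of_pos_right _ hpos
      _ = d.choose (r + 1) * (r + 1).choose (t - 1) := key.symm
      _ = (r + 1).choose (t - 1) * d.choose (r + 1) := mul_comm _ _
      _ ≤ _ := Nat.le_add_left _ _

/-- Supersaturation for cliques without stars (Theorem 1.8 of the paper). -/
theorem cliques_stars_supersaturation (r t : ℕ) (ht : 2 ≤ t) (htr : t ≤ r)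
    (ε : ℝ) (hε : 0 < ε) :
    ∃ δ : ℝ, 0 < δ ∧ ∀ (n : ℕ) (G : SimpleGraph (Fin n)) [DecidableRel G.Adj],
      (1 + ε) * ((n : ℝ) / (r + 1)) * ((r + 1).choose t : ℝ)
          ≤ ((G.cliqueFinset t).card : ℝ) →
      δ * (n : ℝ) ≤ ((∑ v, (G.degree v).choose (r + 1) : ℕ) : ℝ) := by
  have ht1 : 1 ≤ t := by omega
  have hCr : (0:ℝ) < (r.choose (t-1) : ℝ) := by
    exact_mod_cast Nat.choose_pos (by omega)
  have hCr1 : (0:ℝ) < ((r+1).choose (t-1) : ℝ) := by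
    exact_mod_cast Nat.choose_pos (by omega)
  refine ⟨ε * (r.choose (t-1)) / ((r+1).choose (t-1)), by positivity, ?_⟩
  intro n G _ hyp
  -- absorption identity: (r+1) * C(r, t-1) = C(r+1, t) * t
  have habs : (r + 1) * r.choose (t - 1) = (r + 1).choose t * t := by
    have h3 : t - 1 + 1 = t := by omega
    have := Nat.add_one_mul_choose_eq r (t - 1)
    simpa only [Nat.succ_eq_add_one, h3] using this
  -- t * k_t ≤ ∑ C(d, t-1)
  have h1 : (t : ℝ) * ((G.cliqueFinset t).card : ℝ)
      ≤ ((∑ v, (G.degree v).choose (t - 1) : ℕ) : ℝ) := by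
    exact_mod_cast clique_count_le ht1 G
  -- ∑ C(d,t-1) ≤ n * C(r,t-1) + C(r+1,t-1) * ∑ C(d, r+1)
  have h2 : ((∑ v, (G.degree v).choose (t - 1) : ℕ) : ℝ)
      ≤ (n : ℝ) * (r.choose (t-1) : ℝ)
        + ((r+1).choose (t-1) : ℝ) * ((∑ v, (G.degree v).choose (r + 1) : ℕ) : ℝ) := by
    have : (∑ v, (G.degree v).choose (t - 1) : ℕ)
        ≤ ∑ v : Fin n, (r.choose (t-1) + (r+1).choose (t-1) * (G.degree v).choose (r+1)) :=
      Finset.sum_le_sum fun v _ => choose_key ht1 htr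
    have h4 : (∑ v : Fin n, (r.choose (t-1) + (r+1).choose (t-1) * (G.degree v).choose (r+1)))
        = n * r.choose (t-1) + (r+1).choose (t-1) * ∑ v, (G.degree v).choose (r+1) := by
      rw [Finset.sum_add_distrib, Finset.sum_const, Finset.card_univ, Fintype.card_fin,
        smul_eq_mul, ← Finset.mul_sum]
    rw [h4] at this
    exact_mod_cast this
  -- hypothesis rescaled: (1+ε) * n * C(r,t-1) ≤ t * k_t
  have hr1 : (0:ℝ) < (r:ℝ) + 1 := by positivity
  have h3 : (1 + ε) * (n : ℝ) * (r.choose (t-1) : ℝ)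
      ≤ (t : ℝ) * ((G.cliqueFinset t).card : ℝ) := by
    have habsR : ((r:ℝ) + 1) * (r.choose (t-1) : ℝ) = ((r+1).choose t : ℝ) * t := by
      exact_mod_cast habs
    have := mul_le_mul_of_nonneg_right hyp (by positivity : (0:ℝ) ≤ (t:ℝ))
    calc (1 + ε) * (n : ℝ) * (r.choose (t-1) : ℝ)
        = (1 + ε) * ((n : ℝ) / ((r:ℝ)+1)) * (((r:ℝ)+1) * (r.choose (t-1) : ℝ)) := by
          field_simp
      _ = (1 + ε) * ((n : ℝ) / ((r:ℝ)+1)) * ((r+1).choose t : ℝ) * t := by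
          rw [habsR]; ring
      _ ≤ ((G.cliqueFinset t).card : ℝ) * t := by
          have h5 : ((r:ℝ)+1) = ((r:ℕ)+1 : ℝ) := by push_cast; ring
          exact this
      _ = (t : ℝ) * ((G.cliqueFinset t).card : ℝ) := mul_comm _ _
  -- combine
  have h6 : (1 + ε) * (n : ℝ) * (r.choose (t-1) : ℝ)
      ≤ (n : ℝ) * (r.choose (t-1) : ℝ)
        + ((r+1).choose (t-1) : ℝ) * ((∑ v, (G.degree v).choose (r + 1) : ℕ) : ℝ) :=
    le_trans h3 (le_trans h1 h2)
  have h7 : ε * (n : ℝ) * (r.choose (t-1) : ℝ)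
      ≤ ((r+1).choose (t-1) : ℝ) * ((∑ v, (G.degree v).choose (r + 1) : ℕ) : ℝ) := by
    nlinarith [h6]
  rw [div_mul_eq_mul_div, div_le_iff₀ hCr1]
  calc ε * (r.choose (t-1) : ℝ) * (n:ℝ) = ε * (n:ℝ) * (r.choose (t-1) : ℝ) := by ring
    _ ≤ _ := h7
    _ = ((∑ v, (G.degree v).choose (r + 1) : ℕ) : ℝ) * ((r+1).choose (t-1) : ℝ) := mul_comm _ _
end

section
/- For every integer r ≥ 1 there is a constant c > 0 such that for infinitely many n there exists a graph on n vertices which contains no K_{2,r+1} as a subgraph and which contains at least c·n^{3/2} triangles. -/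
open SimpleGraph Finset

/-- Füredi's graph: vertices `F_p × F_p`, `(a,b) ~ (c,d)` iff `b + d = a * c`. -/
def furediGraph (p : ℕ) : SimpleGraph (ZMod p × ZMod p) where
  Adj a b := a ≠ b ∧ a.2 + b.2 = a.1 * b.1
  symm := by
    constructor
    rintro a b ⟨h1, h2⟩
    exact ⟨h1.symm, by rw [add_comm, mul_comm]; exact h2⟩
  loopless := ⟨fun a h => h.1 rfl⟩

instance (p : ℕ) : DecidableRel (furediGraph p).Adj := fun a b =>
  inferInstanceAs (Decidable (a ≠ b ∧ a.2 + b.2 = a.1 * b.1))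

/-- Any two distinct vertices have at most one common neighbor. -/
lemma furediGraph_common {p : ℕ} [Fact p.Prime] {u v w₁ w₂ : ZMod p × ZMod p}
    (huv : u ≠ v) (h1 : (furediGraph p).Adj u w₁) (h2 : (furediGraph p).Adj v w₁)
    (h3 : (furediGraph p).Adj u w₂) (h4 : (furediGraph p).Adj v w₂) : w₁ = w₂ := by
  obtain ⟨-, e1⟩ := h1
  obtain ⟨-, e2⟩ := h2
  obtain ⟨-, e3⟩ := h3
  obtain ⟨-, e4⟩ := h4
  by_cases h : u.1 = v.1
  · exact absurd (Prod.ext h (by linear_combination e1 - e2 + w₁.1 * h)) huv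
  · have hne : u.1 - v.1 ≠ 0 := sub_ne_zero.2 h
    have hw1 : (u.1 - v.1) * w₁.1 = u.2 - v.2 := by linear_combination e2 - e1
    have hw2 : (u.1 - v.1) * w₂.1 = u.2 - v.2 := by linear_combination e4 - e3
    have hfst : w₁.1 = w₂.1 := mul_left_cancel₀ hne (hw1.trans hw2.symm)
    have hsnd : w₁.2 = w₂.2 := by linear_combination e1 - e3 + u.1 * hfst
    exact Prod.ext hfst hsnd

/-- The second coordinate assigned to `x` in the triangle built on a 3-set `s`. -/
noncomputable def yfun (p : ℕ) (s : Finset (ZMod p)) (x : ZMod p) : ZMod p :=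
  (x * ((s.erase x).sum id) - (s.erase x).prod id) * (2 : ZMod p)⁻¹

lemma yfun_add {p : ℕ} [Fact p.Prime] (hp2 : (2 : ZMod p) ≠ 0) {s : Finset (ZMod p)}
    (hs : s.card = 3) {x x' : ZMod p} (hx : x ∈ s) (hx' : x' ∈ s) (hne : x ≠ x') :
    yfun p s x + yfun p s x' = x * x' := by
  have hx'e : x' ∈ s.erase x := mem_erase.2 ⟨hne.symm, hx'⟩
  obtain ⟨z, hz⟩ : ∃ z, (s.erase x).erase x' = {z} := card_eq_one.1 (by
    rw [card_erase_of_mem hx'e, card_erase_of_mem hx, hs])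
  have hzx' : z ≠ x' := by
    have : z ∈ (s.erase x).erase x' := hz ▸ mem_singleton_self z
    exact (mem_erase.1 this).1
  have hzx : z ≠ x := by
    have : z ∈ (s.erase x).erase x' := hz ▸ mem_singleton_self z
    exact (mem_erase.1 ((mem_erase.1 this).2)).1
  have hex : s.erase x = {x', z} := by
    rw [← insert_erase hx'e, hz]
  have hex' : s.erase x' = {x, z} := by
    have hsx : s = {x, x', z} := by
      rw [← insert_erase hx, hex]
    rw [hsx]
    rw [Finset.insert_comm]
    rw [Finset.erase_insert (by simp [hne.symm, hzx'.symm])]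
  rw [yfun, yfun, hex, hex']
  rw [Finset.sum_insert (by simp [hzx'.symm]), Finset.sum_singleton,
    Finset.prod_insert (by simp [hzx'.symm]), Finset.prod_singleton,
    Finset.sum_insert (by simp [hzx.symm]), Finset.sum_singleton,
    Finset.prod_insert (by simp [hzx.symm]), Finset.prod_singleton]
  simp only [id_eq]
  field_simp
  ring

lemma furedi_adj {p : ℕ} [Fact p.Prime] (hp2 : (2 : ZMod p) ≠ 0) {s : Finset (ZMod p)}
    (hs : s.card = 3) {x x' : ZMod p} (hx : x ∈ s) (hx' : x' ∈ s) (hne : x ≠ x') :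
    (furediGraph p).Adj (x, yfun p s x) (x', yfun p s x') := by
  refine ⟨fun h => hne (congrArg Prod.fst h), ?_⟩
  exact yfun_add hp2 hs hx hx' hne

lemma furedi_mem_clique {p : ℕ} [Fact p.Prime] (hp2 : (2 : ZMod p) ≠ 0)
    {s : Finset (ZMod p)} (hs : s.card = 3) :
    s.image (fun x => (x, yfun p s x)) ∈ (furediGraph p).cliqueFinset 3 := by
  rw [mem_cliqueFinset_iff, is3Clique_iff]
  obtain ⟨a, b, c, hab, hac, hbc, rfl⟩ := card_eq_three.1 hs
  set t : Finset (ZMod p) := {a, b, c}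
  have ha : a ∈ t := by simp [t]
  have hb : b ∈ t := by simp [t]
  have hc : c ∈ t := by simp [t]
  refine ⟨(a, yfun p t a), (b, yfun p t b), (c, yfun p t c),
    furedi_adj hp2 hs ha hb hab, furedi_adj hp2 hs ha hc hac,
    furedi_adj hp2 hs hb hc hbc, ?_⟩
  simp [t, Finset.image_insert]

lemma furedi_count {p : ℕ} [Fact p.Prime] (hp2 : (2 : ZMod p) ≠ 0) :
    Nat.choose p 3 ≤ ((furediGraph p).cliqueFinset 3).card := by
  classical
  have := Finset.card_le_card_of_injOn (f := fun s => s.image (fun x => (x, yfun p s x)))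
    (s := (univ : Finset (ZMod p)).powersetCard 3)
    (t := (furediGraph p).cliqueFinset 3)
    (fun s hsm => furedi_mem_clique hp2 (Finset.mem_powersetCard_univ.1 hsm))
    (by
      intro s hsm u hum h
      have key : ∀ w : Finset (ZMod p),
          (w.image (fun x => (x, yfun p w x))).image Prod.fst = w := by
        intro w
        rw [Finset.image_image]
        exact Finset.image_id
      have := congrArg (Finset.image Prod.fst) h
      rwa [key, key] at this)
  rwa [Finset.card_powersetCard, Finset.card_univ, ZMod.card] at this

lemma furedi_nat_bound {p : ℕ} (hp : 3 ≤ p) : p ^ 3 ≤ 27 * Nat.choose p 3 := by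
  have h6 : Nat.descFactorial p 3 = 6 * Nat.choose p 3 := by
    rw [Nat.descFactorial_eq_factorial_mul_choose]
    norm_num [Nat.factorial]
  have hdesc : Nat.descFactorial p 3 = (p - 2) * ((p - 1) * (p * 1)) := rfl
  obtain ⟨q, rfl⟩ := Nat.exists_eq_add_of_le hp
  have : Nat.descFactorial (3 + q) 3 = (q + 1) * ((q + 2) * ((3 + q) * 1)) := by
    rw [hdesc]; congr 2 <;> omega
  nlinarith [Nat.choose_pos (show 3 ≤ 3 + q by omega), this, h6]

/-- Füredi's construction: `K_{2,r+1}`-free graphs with `Ω(n^{3/2})` triangles. -/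
theorem furedi (r : ℕ) (hr : 1 ≤ r) :
    ∃ c : ℝ, 0 < c ∧ ∀ N : ℕ, ∃ n : ℕ, N ≤ n ∧
      ∃ (G : SimpleGraph (Fin n)) (_ : DecidableRel G.Adj),
        (¬ ∃ f : (Fin 2 ⊕ Fin (r + 1)) → Fin n, Function.Injective f ∧
          ∀ a b, (completeBipartiteGraph (Fin 2) (Fin (r + 1))).Adj a b →
            G.Adj (f a) (f b)) ∧
        c * (n : ℝ) ^ ((3 : ℝ) / 2) ≤ ((G.cliqueFinset 3).card : ℝ) := by
  classical
  refine ⟨1 / 27, by norm_num, fun N => ?_⟩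
  obtain ⟨p, hpN, hp⟩ := Nat.exists_infinite_primes (max N 3)
  haveI := Fact.mk hp
  have hp3 : 3 ≤ p := le_trans (le_max_right _ _) hpN
  have hp2 : (2 : ZMod p) ≠ 0 := by
    intro h
    rw [show (2 : ZMod p) = ((2 : ℕ) : ZMod p) by norm_num,
      ZMod.natCast_eq_zero_iff] at h
    exact absurd (Nat.le_of_dvd (by norm_num) h) (by omega)
  refine ⟨p ^ 2, le_trans (le_trans (le_max_left _ _) hpN) (Nat.le_self_pow two_ne_zero p), ?_⟩
  have hcard : Fintype.card (ZMod p × ZMod p) = p ^ 2 := by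
    simp [ZMod.card, sq]
  let e : ZMod p × ZMod p ≃ Fin (p ^ 2) := Fintype.equivFinOfCardEq hcard
  refine ⟨(furediGraph p).map e.toEmbedding, Classical.decRel _, ?_, ?_⟩
  · -- K_{2,r+1}-freeness
    rintro ⟨f, hinj, hadj⟩
    have h01 : (0 : Fin (r + 1)) ≠ 1 := by
      have : (1 : ℕ) < r + 1 := by omega
      simp [Fin.ext_iff, Fin.val_one', Nat.mod_eq_of_lt this]
    have adj' : ∀ (i : Fin 2) (j : Fin (r + 1)),
        (furediGraph p).Adj (e.symm (f (Sum.inl i))) (e.symm (f (Sum.inr j))) := by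
      intro i j
      have h := hadj (Sum.inl i) (Sum.inr j) (by simp)
      rw [SimpleGraph.map_adj] at h
      obtain ⟨u, v, huv, hu, hv⟩ := h
      rw [← hu, ← hv]
      simpa using huv
    have huv : e.symm (f (Sum.inl 0)) ≠ e.symm (f (Sum.inl 1)) := by
      intro h
      exact absurd (hinj (e.symm.injective h)) (by simp)
    have hw : e.symm (f (Sum.inr 0)) ≠ e.symm (f (Sum.inr 1)) := by
      intro h
      exact absurd (hinj (e.symm.injective h)) (by simp [h01])
    exact hw (furediGraph_common huv (adj' 0 0) (adj' 1 0) (adj' 0 1) (adj' 1 1))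
  · -- triangle count
    have hrpow : ((p ^ 2 : ℕ) : ℝ) ^ ((3 : ℝ) / 2) = (p : ℝ) ^ (3 : ℕ) := by
      push_cast
      rw [← Real.rpow_natCast (p : ℝ) 2, ← Real.rpow_mul (Nat.cast_nonneg p),
        ← Real.rpow_natCast (p : ℝ) 3]
      norm_num
    rw [hrpow]
    have h1 : ((p : ℝ) ^ (3 : ℕ)) ≤ 27 * Nat.choose p 3 := by
      exact_mod_cast Nat.cast_le.2 (furedi_nat_bound hp3)
    refine le_trans (by linarith : (1 / 27 : ℝ) * (p : ℝ) ^ (3 : ℕ) ≤ (Nat.choose p 3 : ℝ)) ?_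
    rw [Nat.cast_le]
    have key : p.choose 3 ≤ #((SimpleGraph.map e.toEmbedding (furediGraph p)).cliqueFinset 3) := by
      rw [show (⇑e.toEmbedding) = ⇑e from rfl, cliqueFinset_map_of_equiv, Finset.card_map]
      exact furedi_count hp2
    convert key using 3
end

section
/- Let t > 1 and r ≥ 1 be integers and n ≥ r + 1. The maximum of s_t(G) over all graphs G on n vertices with maximum degree at most r (i.e., S_{r+1}-free graphs) equals n·C(r,t) if n·r is even, and equals (n−1)·C(r,t) + C(r−1,t) if n·r is odd. -/
open SimpleGraph

open Finset

namespace StarsAux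

variable {n : ℕ}

lemma cast_inj_lt [NeZero n] {a b : ℕ} (ha : a < n) (hb : b < n)
    (h : (a : ZMod n) = (b : ZMod n)) : a = b := by
  have := congrArg ZMod.val h
  rwa [ZMod.val_cast_of_lt ha, ZMod.val_cast_of_lt hb] at this

/-- The matching partner(s) of `v` as a finset. -/
def matchPart [NeZero n] (v : ZMod n) : Finset (ZMod n) :=
  if v = 0 then ∅ else if Odd v.val then {v + 1} else {v - 1}

def nbr [NeZero n] (D : Finset ℕ) (useM : Bool) (v : ZMod n) : Finset (ZMod n) :=
  (D.image fun d : ℕ => v + (d : ZMod n)) ∪ (if useM then matchPart v else ∅)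

def graphOf [NeZero n] (D : Finset ℕ) (useM : Bool) : SimpleGraph (ZMod n) where
  Adj v w := v ≠ w ∧ (w ∈ nbr D useM v ∨ v ∈ nbr D useM w)
  symm := ⟨fun v w ⟨h1, h2⟩ => ⟨h1.symm, h2.symm⟩⟩
  loopless := ⟨fun v ⟨h1, _⟩ => h1 rfl⟩

instance [NeZero n] (D : Finset ℕ) (useM : Bool) : DecidableRel (graphOf (n := n) D useM).Adj :=
  fun _ _ => instDecidableAnd

section MatchLemmas

variable [NeZero n] (hodd : Odd n)
include hodd

lemma val_add_one {v : ZMod n} (h : Odd v.val) : (v + 1).val = v.val + 1 := by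
  have h1 : v.val < n := v.val_lt
  have h2 : v.val ≠ n - 1 := by
    intro he
    have : Odd (n - 1) := he ▸ h
    obtain ⟨m, hm⟩ := hodd
    obtain ⟨l, hl⟩ := this
    omega
  have h3 : v.val + 1 < n := by omega
  calc (v + 1).val = (((v.val + 1 : ℕ)) : ZMod n).val := by
        rw [Nat.cast_add, ZMod.natCast_zmod_val, Nat.cast_one]
    _ = v.val + 1 := ZMod.val_cast_of_lt h3

omit hodd in
lemma val_sub_one {v : ZMod n} (h : v ≠ 0) : (v - 1).val = v.val - 1 := by
  have h1 : v.val < n := v.val_lt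
  have h2 : 1 ≤ v.val := by
    rcases Nat.eq_zero_or_pos v.val with h0 | h0
    · exact absurd ((ZMod.val_eq_zero v).mp h0) h
    · exact h0
  calc (v - 1).val = (((v.val - 1 : ℕ)) : ZMod n).val := by
        rw [Nat.cast_sub h2, ZMod.natCast_zmod_val, Nat.cast_one]
    _ = v.val - 1 := ZMod.val_cast_of_lt (by omega)

lemma mem_matchPart_symm {v w : ZMod n} (h : w ∈ matchPart v) : v ∈ matchPart w := by
  unfold matchPart at h ⊢
  by_cases h0 : v = 0
  · simp [h0] at h
  by_cases ho : Odd v.val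
  · simp only [if_neg h0, if_pos ho, mem_singleton] at h
    subst h
    have hv : (v + 1).val = v.val + 1 := val_add_one hodd ho
    have hne : v + 1 ≠ 0 := by
      intro he; rw [he] at hv; simp [ZMod.val_zero] at hv
    have hno : ¬ Odd (v + 1).val := by rw [hv]; simp [Nat.odd_add_one, ho]
    simp only [if_neg hne, if_neg hno, mem_singleton]
    ring
  · simp only [if_neg h0, if_neg ho, mem_singleton] at h
    subst h
    have h2 : 2 ≤ v.val := by
      have h1 : 1 ≤ v.val := by
        rcases Nat.eq_zero_or_pos v.val with hz | hz
        · exact absurd ((ZMod.val_eq_zero v).mp hz) h0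
        · exact hz
      rcases Nat.even_or_odd v.val with he | hodd'
      · obtain ⟨m, hm⟩ := he; omega
      · exact absurd hodd' ho
    have hv : (v - 1).val = v.val - 1 := val_sub_one h0
    have hne : v - 1 ≠ 0 := by
      intro he
      rw [he, ZMod.val_zero] at hv
      omega
    have hno : Odd (v - 1).val := by
      rw [hv]
      rcases Nat.even_or_odd v.val with he | hodd'
      · obtain ⟨m, hm⟩ := he; exact ⟨m - 1, by omega⟩
      · exact absurd hodd' ho
    simp only [if_neg hne, if_pos hno, mem_singleton]
    ring

lemma matchPart_subset {v w : ZMod n} (h : w ∈ matchPart v) : w = v + 1 ∨ w = v - 1 := by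
  unfold matchPart at h
  by_cases h0 : v = 0
  · simp [h0] at h
  by_cases ho : Odd v.val <;> simp_all

omit hodd in
lemma not_mem_matchPart_self {v : ZMod n} : v ∉ matchPart v := by
  unfold matchPart
  by_cases h0 : v = 0
  · simp [h0]
  by_cases ho : Odd v.val
  · simp only [if_neg h0, if_pos ho, mem_singleton]
    intro he
    have := congrArg (· - v) he
    simp at this
    have : n ∣ 1 := by
      have := (ZMod.natCast_eq_zero_iff 1 n).mp (by rw [Nat.cast_one]; exact this.symm)
      exact this
    have hn1 : n = 1 := Nat.dvd_one.mp this
    subst hn1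
    exact h0 (Subsingleton.elim v 0)
  · simp only [if_neg h0, if_neg ho, mem_singleton]
    intro he
    have : (1 : ZMod n) = 0 := by
      have := congrArg (v - ·) he
      simpa using this.symm
    have : n ∣ 1 := (ZMod.natCast_eq_zero_iff 1 n).mp (by rw [Nat.cast_one]; exact this)
    have hn1 : n = 1 := Nat.dvd_one.mp this
    subst hn1
    exact h0 (Subsingleton.elim v 0)

omit hodd in
lemma card_matchPart {v : ZMod n} : (matchPart v).card = if v = 0 then 0 else 1 := by
  unfold matchPart
  by_cases h0 : v = 0
  · simp [h0]
  · by_cases ho : Odd v.val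
    · rw [if_neg h0, if_pos ho, if_neg h0, card_singleton]
    · rw [if_neg h0, if_neg ho, if_neg h0, card_singleton]

end MatchLemmas

section GraphLemmas

variable [NeZero n] {D : Finset ℕ} {useM : Bool}
variable (hD : D ⊆ Icc 1 (n - 1)) (hsym : ∀ d ∈ D, n - d ∈ D)
variable (hM : useM = true → D ⊆ Icc 2 (n - 2) ∧ Odd n)

include hD in
lemma not_mem_image_self {v : ZMod n} : v ∉ D.image fun d : ℕ => v + (d : ZMod n) := by
  simp only [mem_image, not_exists]
  intro d hde
  obtain ⟨hd, he⟩ := hde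
  have hcast : (d : ZMod n) = 0 := by
    have := congrArg (· - v) he
    simpa using this
  have hdvd : n ∣ d := (ZMod.natCast_eq_zero_iff d n).mp hcast
  have := hD hd
  simp only [mem_Icc] at this
  have := Nat.le_of_dvd (by omega) hdvd
  omega

include hD hM in
lemma not_mem_nbr_self {v : ZMod n} : v ∉ nbr D useM v := by
  unfold nbr
  simp only [mem_union, not_or]
  refine ⟨not_mem_image_self hD, ?_⟩
  cases useM
  · simp
  · simpa using not_mem_matchPart_self

include hD hsym hM in
lemma mem_nbr_symm {v w : ZMod n} (h : w ∈ nbr D useM v) : v ∈ nbr D useM w := by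
  unfold nbr at h ⊢
  simp only [mem_union] at h ⊢
  rcases h with h | h
  · left
    simp only [mem_image] at h ⊢
    obtain ⟨d, hd, he⟩ := h
    refine ⟨n - d, hsym d hd, ?_⟩
    have hdn : d ≤ n := by have := hD hd; simp only [mem_Icc] at this; omega
    rw [← he]
    have : ((d : ZMod n)) + ((n - d : ℕ) : ZMod n) = 0 := by
      rw [← Nat.cast_add, Nat.add_sub_cancel' hdn, ZMod.natCast_self]
    calc v + ↑d + ↑(n - d) = v + (↑d + ↑(n - d)) := by ring
      _ = v := by rw [this, add_zero]
  · cases useM with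
    | false => simp at h
    | true =>
      right
      simp only [if_pos] at h ⊢
      exact mem_matchPart_symm (hM rfl).2 h

include hD hsym hM in
lemma adj_graphOf {v w : ZMod n} : (graphOf D useM).Adj v w ↔ w ∈ nbr D useM v := by
  constructor
  · rintro ⟨hne, h | h⟩
    · exact h
    · exact mem_nbr_symm hD hsym hM h
  · intro h
    refine ⟨?_, Or.inl h⟩
    rintro rfl
    exact not_mem_nbr_self hD hM h

include hD hsym hM in
lemma neighborFinset_graphOf {v : ZMod n} :
    (graphOf D useM).neighborFinset v = nbr D useM v := by
  ext w
  rw [mem_neighborFinset]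
  exact adj_graphOf hD hsym hM

include hD hsym hM in
lemma degree_graphOf {v : ZMod n} :
    (graphOf D useM).degree v =
      D.card + (if useM = true ∧ v ≠ 0 then 1 else 0) := by
  rw [degree, neighborFinset_graphOf hD hsym hM]
  unfold nbr
  have hinj : Set.InjOn (fun d : ℕ => v + (d : ZMod n)) D := by
    intro a ha b hb he
    simp only at he
    have : (a : ZMod n) = b := by
      have := congrArg (· - v) he
      simpa [add_comm, add_sub_cancel_left] using this
    have haa := hD ha; have hbb := hD hb
    simp only [mem_Icc] at haa hbb
    exact cast_inj_lt (by omega) (by omega) this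
  have hcardim : (D.image fun d : ℕ => v + (d : ZMod n)).card = D.card :=
    Finset.card_image_of_injOn hinj
  have hdisj : Disjoint (D.image fun d : ℕ => v + (d : ZMod n))
      (if useM then matchPart v else ∅) := by
    cases useM with
    | false => simp
    | true =>
      simp only [if_pos]
      rw [Finset.disjoint_left]
      intro w hw hw'
      obtain ⟨hDsub, hodd⟩ := hM rfl
      simp only [mem_image] at hw
      obtain ⟨d, hd, he⟩ := hw
      have hdmem := hDsub hd
      simp only [mem_Icc] at hdmem
      have hn4 : 4 ≤ n := by omega
      rcases matchPart_subset hodd hw' with h1 | h1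
      · rw [h1] at he
        have : (d : ZMod n) = ((1 : ℕ) : ZMod n) := by
          have := congrArg (· - v) he
          simpa [add_comm, add_sub_cancel_left] using this
        have := cast_inj_lt (by omega) (by omega) this
        omega
      · rw [h1] at he
        have hv1 : (v - 1 : ZMod n) = v + ((n - 1 : ℕ) : ZMod n) := by
          have : ((n - 1 : ℕ) : ZMod n) = -1 := by
            have h1n : ((n - 1 : ℕ) : ZMod n) + 1 = 0 := by
              have hx : ((n - 1 : ℕ) : ZMod n) + ((1 : ℕ) : ZMod n) = ((n : ℕ) : ZMod n) := by
                rw [← Nat.cast_add]; congr 1; omega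
              rw [ZMod.natCast_self] at hx
              simpa using hx
            linear_combination h1n
          rw [this]; ring
        rw [hv1] at he
        have : (d : ZMod n) = ((n - 1 : ℕ) : ZMod n) := by
          have := congrArg (· - v) he
          simpa [add_comm, add_sub_cancel_left] using this
        have := cast_inj_lt (by omega) (by omega) this
        omega
  rw [Finset.card_union_of_disjoint hdisj, hcardim]
  congr 1
  cases useM with
  | false => simp
  | true =>
    simp only [if_pos]
    rw [card_matchPart]
    by_cases h0 : v = 0 <;> simp [h0]

end GraphLemmas

section Construct

variable [NeZero n]

lemma exists_graph_even (r : ℕ) (hr : 1 ≤ r) (hn : r + 1 ≤ n) (hpar : Even (n * r)) :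
    ∃ (G : SimpleGraph (ZMod n)) (_ : DecidableRel G.Adj), ∀ v, G.degree v = r := by
  rcases Nat.even_mul.mp hpar with hne | hre
  swap
  · -- r even
    obtain ⟨k, hk⟩ := hre
    have hk1 : 1 ≤ k := by omega
    set D : Finset ℕ := Icc 1 k ∪ Icc (n - k) (n - 1) with hDdef
    have hD : D ⊆ Icc 1 (n - 1) := by
      intro d hd
      simp only [hDdef, mem_union, mem_Icc] at hd
      simp only [mem_Icc]
      omega
    have hsym : ∀ d ∈ D, n - d ∈ D := by
      intro d hd
      simp only [hDdef, mem_union, mem_Icc] at hd ⊢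
      omega
    have hM : (false : Bool) = true → D ⊆ Icc 2 (n - 2) ∧ Odd n := by simp
    have hcard : D.card = r := by
      rw [hDdef, card_union_of_disjoint, Nat.card_Icc, Nat.card_Icc]
      · omega
      · rw [Finset.disjoint_left]
        intro a ha ha'
        simp only [mem_Icc] at ha ha'
        omega
    refine ⟨graphOf D false, inferInstance, fun v => ?_⟩
    rw [degree_graphOf hD hsym hM, hcard]
    simp
  · -- n even
    rcases Nat.even_or_odd r with hre | hro
    · obtain ⟨k, hk⟩ := hre
      have hk1 : 1 ≤ k := by omega
      set D : Finset ℕ := Icc 1 k ∪ Icc (n - k) (n - 1) with hDdef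
      have hD : D ⊆ Icc 1 (n - 1) := by
        intro d hd
        simp only [hDdef, mem_union, mem_Icc] at hd
        simp only [mem_Icc]
        omega
      have hsym : ∀ d ∈ D, n - d ∈ D := by
        intro d hd
        simp only [hDdef, mem_union, mem_Icc] at hd ⊢
        omega
      have hM : (false : Bool) = true → D ⊆ Icc 2 (n - 2) ∧ Odd n := by simp
      have hcard : D.card = r := by
        rw [hDdef, card_union_of_disjoint, Nat.card_Icc, Nat.card_Icc]
        · omega
        · rw [Finset.disjoint_left]
          intro a ha ha'
          simp only [mem_Icc] at ha ha'
          omega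
      refine ⟨graphOf D false, inferInstance, fun v => ?_⟩
      rw [degree_graphOf hD hsym hM, hcard]
      simp
    · -- r odd, n even
      obtain ⟨k, hk⟩ := hro
      obtain ⟨m, hm⟩ := hne
      have hm2 : n / 2 = m := by omega
      set D : Finset ℕ := (Icc 1 k ∪ Icc (n - k) (n - 1)) ∪ {n / 2} with hDdef
      have hD : D ⊆ Icc 1 (n - 1) := by
        intro d hd
        simp only [hDdef, mem_union, mem_Icc, mem_singleton] at hd
        simp only [mem_Icc]
        omega
      have hsym : ∀ d ∈ D, n - d ∈ D := by
        intro d hd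
        simp only [hDdef, mem_union, mem_Icc, mem_singleton] at hd ⊢
        omega
      have hM : (false : Bool) = true → D ⊆ Icc 2 (n - 2) ∧ Odd n := by simp
      have hcard : D.card = r := by
        rw [hDdef, card_union_of_disjoint, card_union_of_disjoint, Nat.card_Icc,
          Nat.card_Icc, card_singleton]
        · omega
        · rw [Finset.disjoint_left]
          intro a ha ha'
          simp only [mem_Icc] at ha ha'
          omega
        · rw [Finset.disjoint_left]
          intro a ha ha'
          simp only [mem_union, mem_Icc, mem_singleton] at ha ha'
          omega
      refine ⟨graphOf D false, inferInstance, fun v => ?_⟩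
      rw [degree_graphOf hD hsym hM, hcard]
      simp

lemma exists_graph_odd (r : ℕ) (hr : 1 ≤ r) (hn : r + 1 ≤ n) (hnodd : Odd n)
    (hrodd : Odd r) :
    ∃ (G : SimpleGraph (ZMod n)) (_ : DecidableRel G.Adj),
      G.degree 0 = r - 1 ∧ ∀ v, v ≠ 0 → G.degree v = r := by
  obtain ⟨k, hk⟩ := hrodd
  obtain ⟨m, hm⟩ := hnodd
  have hn3 : 2 * k + 3 ≤ n := by omega
  set D : Finset ℕ := Icc 2 (k + 1) ∪ Icc (n - k - 1) (n - 2) with hDdef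
  have hD : D ⊆ Icc 1 (n - 1) := by
    intro d hd
    simp only [hDdef, mem_union, mem_Icc] at hd
    simp only [mem_Icc]
    omega
  have hsym : ∀ d ∈ D, n - d ∈ D := by
    intro d hd
    simp only [hDdef, mem_union, mem_Icc] at hd ⊢
    omega
  have hM : (true : Bool) = true → D ⊆ Icc 2 (n - 2) ∧ Odd n := by
    intro _
    refine ⟨?_, ⟨m, hm⟩⟩
    intro d hd
    simp only [hDdef, mem_union, mem_Icc] at hd
    simp only [mem_Icc]
    omega
  have hcard : D.card = r - 1 := by
    rw [hDdef, card_union_of_disjoint, Nat.card_Icc, Nat.card_Icc]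
    · omega
    · rw [Finset.disjoint_left]
      intro a ha ha'
      simp only [mem_Icc] at ha ha'
      omega
  refine ⟨graphOf D true, inferInstance, ?_, fun v hv => ?_⟩
  · rw [degree_graphOf hD hsym hM, hcard]
    simp
  · rw [degree_graphOf hD hsym hM, hcard, if_pos ⟨rfl, hv⟩]
    omega

end Construct

section Transport

variable [NeZero n]

def zEquiv (n : ℕ) [NeZero n] : ZMod n ≃ Fin n where
  toFun x := ⟨x.val, x.val_lt⟩
  invFun i := ((i : ℕ) : ZMod n)
  left_inv x := ZMod.natCast_zmod_val x
  right_inv i := by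
    ext
    exact ZMod.val_cast_of_lt i.isLt

def pull (G : SimpleGraph (ZMod n)) : SimpleGraph (Fin n) where
  Adj a b := G.Adj ((zEquiv n).symm a) ((zEquiv n).symm b)
  symm := ⟨fun a b h => G.adj_symm h⟩
  loopless := ⟨fun a h => G.irrefl h⟩

instance (G : SimpleGraph (ZMod n)) [h : DecidableRel G.Adj] :
    DecidableRel (pull G).Adj := fun _ _ => h _ _

lemma degree_pull (G : SimpleGraph (ZMod n)) [DecidableRel G.Adj] (a : Fin n) :
    (pull G).degree a = G.degree ((zEquiv n).symm a) := by
  have hnf : (pull G).neighborFinset a =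
      (G.neighborFinset ((zEquiv n).symm a)).map (zEquiv n).toEmbedding := by
    ext b
    rw [Finset.mem_map_equiv, mem_neighborFinset, mem_neighborFinset]
    rfl
  rw [degree, degree, hnf, Finset.card_map]

end Transport

end StarsAux

open StarsAux

/-- The maximum number of copies of the star `S_t` in an `S_{r+1}`-free graph
(i.e., a graph with maximum degree at most `r`) on `n ≥ r+1` vertices. -/
theorem stars_without_stars (r t n : ℕ) (ht : 1 < t) (hr : 1 ≤ r) (hn : r + 1 ≤ n) :
    IsGreatest
      {m : ℕ | ∃ (G : SimpleGraph (Fin n)) (_ : DecidableRel G.Adj),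
        (∀ v, G.degree v ≤ r) ∧ m = ∑ v, (G.degree v).choose t}
      (if Even (n * r) then n * r.choose t
       else (n - 1) * r.choose t + (r - 1).choose t) := by
  haveI : NeZero n := ⟨by omega⟩
  constructor
  · -- membership
    by_cases hpar : Even (n * r)
    · rw [if_pos hpar]
      obtain ⟨G, inst, hdeg⟩ := exists_graph_even (n := n) r hr hn hpar
      refine ⟨pull G, inferInstance, fun v => ?_, ?_⟩
      · rw [degree_pull, hdeg]
      · have h1 : ∀ a : Fin n, ((pull G).degree a).choose t = r.choose t := by
          intro a
          rw [degree_pull, hdeg]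
        rw [Finset.sum_congr rfl fun a _ => h1 a, Finset.sum_const, card_univ,
          Fintype.card_fin, smul_eq_mul]
    · rw [if_neg hpar]
      have hodd : Odd (n * r) := Nat.not_even_iff_odd.mp hpar
      have hno : Odd n := (Nat.odd_mul.mp hodd).1
      have hro : Odd r := (Nat.odd_mul.mp hodd).2
      obtain ⟨G, inst, hdeg0, hdeg⟩ := exists_graph_odd (n := n) r hr hn hno hro
      refine ⟨pull G, inferInstance, fun v => ?_, ?_⟩
      · rw [degree_pull]
        by_cases hv : (zEquiv n).symm v = 0
        · rw [hv, hdeg0]; omega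
        · rw [hdeg _ hv]
      · have hsum : ∑ a : Fin n, ((pull G).degree a).choose t
            = ∑ x : ZMod n, (G.degree x).choose t := by
          simp_rw [degree_pull]
          exact Equiv.sum_comp (zEquiv n).symm fun x => (G.degree x).choose t
        rw [hsum, ← Finset.add_sum_erase _ _ (mem_univ (0 : ZMod n)), hdeg0]
        have h2 : ∀ x ∈ (univ : Finset (ZMod n)).erase 0,
            (G.degree x).choose t = r.choose t := by
          intro x hx
          rw [hdeg x (Finset.mem_erase.mp hx).1]
        rw [Finset.sum_congr rfl h2, Finset.sum_const, Finset.card_erase_of_mem (mem_univ _),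
          card_univ, ZMod.card, smul_eq_mul]
        ring
  · -- upper bound
    rintro m ⟨G, inst, hdeg, rfl⟩
    by_cases hpar : Even (n * r)
    · rw [if_pos hpar]
      calc ∑ v, (G.degree v).choose t ≤ ∑ _v : Fin n, r.choose t :=
            Finset.sum_le_sum fun v _ => Nat.choose_le_choose t (hdeg v)
        _ = n * r.choose t := by
            rw [Finset.sum_const, card_univ, Fintype.card_fin, smul_eq_mul]
    · rw [if_neg hpar]
      have hall : ¬ ∀ v, G.degree v = r := by
        intro hall
        apply hpar
        have : ∑ v, G.degree v = n * r := by
          rw [Finset.sum_congr rfl fun v _ => hall v, Finset.sum_const, card_univ,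
            Fintype.card_fin, smul_eq_mul]
        have heven : Even (∑ v, G.degree v) := by
          rw [G.sum_degrees_eq_twice_card_edges]
          exact even_two_mul _
        rwa [this] at heven
      push_neg at hall
      obtain ⟨v0, hv0⟩ := hall
      have hv0le : G.degree v0 ≤ r - 1 := by
        have := hdeg v0
        omega
      rw [← Finset.add_sum_erase _ _ (mem_univ v0)]
      have h1 : (G.degree v0).choose t ≤ (r - 1).choose t := Nat.choose_le_choose t hv0le
      have h2 : ∑ v ∈ (univ : Finset (Fin n)).erase v0, (G.degree v).choose t
          ≤ (n - 1) * r.choose t := by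
        calc ∑ v ∈ (univ : Finset (Fin n)).erase v0, (G.degree v).choose t
            ≤ ∑ _v ∈ (univ : Finset (Fin n)).erase v0, r.choose t :=
              Finset.sum_le_sum fun v _ => Nat.choose_le_choose t (hdeg v)
          _ = (n - 1) * r.choose t := by
              rw [Finset.sum_const, Finset.card_erase_of_mem (mem_univ _), card_univ,
                Fintype.card_fin, smul_eq_mul]
      omega
end

section
/- Let r and t be integers with 2 ≤ t ≤ r and let ε > 0. If G is a graph on n vertices with s_t(G) ≥ (1 + ε)·n·C(r,t), then s_{r+1}(G) ≥ ε·n·(r − t + 1)/t. -/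
open SimpleGraph

lemma star_key_pointwise (r s : ℕ) (hsr : s + 1 ≤ r) : ∀ d : ℕ,
    (r - s) * d.choose (s + 1) ≤
      (r - s) * r.choose (s + 1) + (s + 1) * r.choose (s + 1) * d.choose (r + 1) := by
  intro d
  induction d with
  | zero => simp
  | succ d ih =>
    by_cases hd : d + 1 ≤ r
    · have h1 : (d + 1).choose (s + 1) ≤ r.choose (s + 1) := Nat.choose_le_choose _ hd
      have h2 : (r - s) * (d + 1).choose (s + 1) ≤ (r - s) * r.choose (s + 1) :=
        Nat.mul_le_mul_left _ h1
      omega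
    · have hrd : r ≤ d := by omega
      rw [Nat.choose_succ_succ d s, Nat.choose_succ_succ d r]
      have e1 : r.choose (s + 1) * (s + 1) = r.choose s * (r - s) :=
        Nat.choose_succ_right_eq r s
      have e2 : d.choose r * r.choose s = d.choose s * (d - s).choose (r - s) :=
        Nat.choose_mul (n := d) (by omega)
      have e3 : 0 < (d - s).choose (r - s) :=
        Nat.choose_pos (by omega)
      have h1 : (r - s) * d.choose s ≤ (s + 1) * r.choose (s + 1) * d.choose r := by
        calc (r - s) * d.choose s
            ≤ (r - s) * (d.choose s * (d - s).choose (r - s)) :=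
              Nat.mul_le_mul_left _ (Nat.le_mul_of_pos_right _ e3)
          _ = (r - s) * (d.choose r * r.choose s) := by rw [← e2]
          _ = (r.choose s * (r - s)) * d.choose r := by ring
          _ = (r.choose (s + 1) * (s + 1)) * d.choose r := by rw [e1]
          _ = (s + 1) * r.choose (s + 1) * d.choose r := by ring
      simp only [Nat.succ_eq_add_one]
      rw [Nat.mul_add, Nat.mul_add]
      linarith [ih, h1]

/-- Supersaturation for stars without stars. -/
theorem stars_stars_supersaturation (r t : ℕ) (ht : 2 ≤ t) (htr : t ≤ r)
    (ε : ℝ) (hε : 0 < ε) (n : ℕ) (G : SimpleGraph (Fin n)) [DecidableRel G.Adj]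
    (h : (1 + ε) * (n : ℝ) * (r.choose t : ℝ)
        ≤ ((∑ v, (G.degree v).choose t : ℕ) : ℝ)) :
    ε * (n : ℝ) * ((r : ℝ) - t + 1) / t
      ≤ ((∑ v, (G.degree v).choose (r + 1) : ℕ) : ℝ) := by
  obtain ⟨s, rfl⟩ : ∃ s, t = s + 1 := ⟨t - 1, by omega⟩
  have hsr : s + 1 ≤ r := htr
  -- summed key inequality over ℕ
  have hkey : (r - s) * (∑ v, (G.degree v).choose (s + 1)) ≤
      (r - s) * r.choose (s + 1) * n
        + (s + 1) * r.choose (s + 1) * (∑ v, (G.degree v).choose (r + 1)) := by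
    rw [Finset.mul_sum, Finset.mul_sum]
    calc ∑ v, (r - s) * (G.degree v).choose (s + 1)
        ≤ ∑ v : Fin n, ((r - s) * r.choose (s + 1)
            + (s + 1) * r.choose (s + 1) * (G.degree v).choose (r + 1)) :=
          Finset.sum_le_sum fun v _ => star_key_pointwise r s hsr _
      _ = _ := by
          rw [Finset.sum_add_distrib, Finset.sum_const, Finset.card_univ, Fintype.card_fin,
            smul_eq_mul, mul_comm]
  -- move to ℝ
  set S1 : ℕ := ∑ v, (G.degree v).choose (s + 1) with hS1
  set S2 : ℕ := ∑ v, (G.degree v).choose (r + 1) with hS2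
  have hkeyR : ((r : ℝ) - s) * S1 ≤
      ((r : ℝ) - s) * r.choose (s + 1) * n + (s + 1) * r.choose (s + 1) * S2 := by
    have := (Nat.cast_le (α := ℝ)).2 hkey
    push_cast [Nat.cast_sub (by omega : s ≤ r)] at this
    convert this using 2 <;> push_cast <;> ring
  have hc : (0 : ℝ) < r.choose (s + 1) := by
    exact_mod_cast Nat.choose_pos hsr
  have hAnn : (0 : ℝ) ≤ (r : ℝ) - s := by
    have : (s : ℝ) ≤ r := by exact_mod_cast (by omega : s ≤ r)
    linarith
  have h2 : ((r : ℝ) - s) * ((1 + ε) * n * r.choose (s + 1)) ≤ ((r : ℝ) - s) * S1 :=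
    mul_le_mul_of_nonneg_left h hAnn
  have hT : (0 : ℝ) < ((s : ℝ) + 1) := by positivity
  rw [div_le_iff₀ (by push_cast; linarith)]
  have hgoal : ε * n * ((r : ℝ) - s) ≤ S2 * ((s : ℝ) + 1) := by
    nlinarith [h2, hkeyR, hc, hAnn, Nat.cast_nonneg (α := ℝ) n]
  push_cast
  nlinarith [hgoal]
end

section
/- For all integers 1 ≤ t < s, the function f_s ∘ f_t^{−1} is convex on (0, ∞) and strictly convex on (C(s−1, t), ∞). -/
/-- `fm m x = C(x, m)` for `x ≥ m - 1`, and `0` for `x < m - 1`. -/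
noncomputable def fm (m : ℕ) (x : ℝ) : ℝ :=
  if (m : ℝ) - 1 ≤ x then (∏ i ∈ Finset.range m, (x - i)) / (m.factorial : ℝ) else 0

open Finset Set
namespace ConvAux

noncomputable def pr (S : Finset ℕ) (x : ℝ) : ℝ := ∏ i ∈ S, (x - (i:ℝ))
noncomputable def dpr (S : Finset ℕ) (x : ℝ) : ℝ := ∑ i ∈ S, ∏ j ∈ S.erase i, (x - (j:ℝ))

theorem hasDerivAt_pr (S : Finset ℕ) (x : ℝ) : HasDerivAt (pr S) (dpr S x) x := by
  have := HasDerivAt.fun_finsetProd (u := S) (f := fun i y => y - (i:ℝ)) (f' := fun _ => 1)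
    (x := x) (fun i _ => (hasDerivAt_id x).sub_const _)
  show HasDerivAt (fun x => ∏ i ∈ S, (x - (i:ℝ))) (dpr S x) x
  simpa [pr, dpr] using this

variable {S : Finset ℕ} {c x y : ℝ}

theorem pr_pos (hS : ∀ i ∈ S, (i:ℝ) ≤ c) (hx : c < x) : 0 < pr S x :=
  Finset.prod_pos fun i hi => by have := hS i hi; linarith

theorem pr_nonneg (hS : ∀ i ∈ S, (i:ℝ) ≤ c) (hx : c ≤ x) : 0 ≤ pr S x :=
  Finset.prod_nonneg fun i hi => by have := hS i hi; linarith

theorem pr_le_pr (hS : ∀ i ∈ S, (i:ℝ) ≤ c) (hx : c ≤ x) (hxy : x ≤ y) :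
    pr S x ≤ pr S y :=
  Finset.prod_le_prod (fun i hi => by have := hS i hi; linarith)
    (fun i hi => by linarith)

theorem pr_lt_pr (hS : ∀ i ∈ S, (i:ℝ) ≤ c) (hne : S.Nonempty) (hx : c ≤ x) (hxy : x < y) :
    pr S x < pr S y := by
  by_cases hall : ∀ i ∈ S, (i:ℝ) < x
  · exact Finset.prod_lt_prod_of_nonempty (fun i hi => by have := hall i hi; linarith)
      (fun i hi => by linarith) hne
  · push_neg at hall
    obtain ⟨i, hi, hix⟩ := hall
    have h0 : pr S x = 0 := Finset.prod_eq_zero hi (by have := hS i hi; linarith)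
    rw [h0]
    exact pr_pos hS (lt_of_le_of_lt hx hxy)

theorem dpr_nonneg (hS : ∀ i ∈ S, (i:ℝ) ≤ c) (hx : c ≤ x) : 0 ≤ dpr S x :=
  Finset.sum_nonneg fun i _ => Finset.prod_nonneg fun j hj => by
    have := hS j (Finset.mem_of_mem_erase hj); linarith

theorem dpr_le_dpr (hS : ∀ i ∈ S, (i:ℝ) ≤ c) (hx : c ≤ x) (hxy : x ≤ y) :
    dpr S x ≤ dpr S y :=
  Finset.sum_le_sum fun i _ =>
    Finset.prod_le_prod (fun j hj => by have := hS j (Finset.mem_of_mem_erase hj); linarith)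
      (fun j _ => by linarith)

theorem dpr_pos (hS : ∀ i ∈ S, (i:ℝ) ≤ c) (hne : S.Nonempty) (hx : c ≤ x) : 0 < dpr S x := by
  have hmax := S.max'_mem hne
  refine Finset.sum_pos' (fun i _ => Finset.prod_nonneg fun j hj => by
    have := hS j (Finset.mem_of_mem_erase hj); linarith) ⟨S.max' hne, hmax, ?_⟩
  refine Finset.prod_pos fun j hj => ?_
  have hj1 : j ≠ S.max' hne := Finset.ne_of_mem_erase hj
  have hj2 : j ≤ S.max' hne := S.le_max' j (Finset.mem_of_mem_erase hj)
  have hj3 : j + 1 ≤ S.max' hne := Nat.succ_le_of_lt (lt_of_le_of_ne hj2 hj1)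
  have hc : ((S.max' hne : ℕ) : ℝ) ≤ c := hS _ hmax
  have : ((j:ℝ)) + 1 ≤ ((S.max' hne : ℕ) : ℝ) := by exact_mod_cast hj3
  linarith

theorem dpr_eq (hall : ∀ i ∈ S, (i:ℝ) < x) :
    dpr S x = pr S x * ∑ i ∈ S, (x - (i:ℝ))⁻¹ := by
  rw [Finset.mul_sum, dpr]
  refine Finset.sum_congr rfl fun i hi => ?_
  have hne : x - (i:ℝ) ≠ 0 := by have := hall i hi; intro h; linarith [sub_eq_zero.mp h]
  field_simp
  rw [Finset.prod_erase_mul _ _ hi]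
  rfl

theorem ratio_mono (hS : ∀ i ∈ S, (i:ℝ) ≤ c) (hne : S.Nonempty) (hx : c < x) (hxy : x ≤ y) :
    pr S x / dpr S x ≤ pr S y / dpr S y := by
  have hallx : ∀ i ∈ S, (i:ℝ) < x := fun i hi => lt_of_le_of_lt (hS i hi) hx
  have hally : ∀ i ∈ S, (i:ℝ) < y := fun i hi => lt_of_lt_of_le (hallx i hi) hxy
  have hpx := pr_pos hS hx
  have hpy := pr_pos hS (lt_of_lt_of_le hx hxy)
  have hAx : (0:ℝ) < ∑ i ∈ S, (x - (i:ℝ))⁻¹ :=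
    Finset.sum_pos (fun i hi => by have := hallx i hi; exact inv_pos.mpr (by linarith)) hne
  have hAy : (0:ℝ) < ∑ i ∈ S, (y - (i:ℝ))⁻¹ :=
    Finset.sum_pos (fun i hi => by have := hally i hi; exact inv_pos.mpr (by linarith)) hne
  have hle : ∑ i ∈ S, (y - (i:ℝ))⁻¹ ≤ ∑ i ∈ S, (x - (i:ℝ))⁻¹ :=
    Finset.sum_le_sum fun i hi => by
      have h1 := hallx i hi
      exact one_div (x - (i:ℝ)) ▸ one_div (y - (i:ℝ)) ▸
        one_div_le_one_div_of_le (by linarith) (by linarith)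
  rw [dpr_eq hallx, dpr_eq hally]
  rw [div_mul_eq_div_div_swap, div_div_cancel_left' (ne_of_gt hpx),
    div_mul_eq_div_div_swap, div_div_cancel_left' (ne_of_gt hpy)]
  exact inv_anti₀ hAy hle


section TS

variable {t s : ℕ} {x y : ℝ}

theorem cast_le_range {m : ℕ} : ∀ i ∈ Finset.range m, (i:ℝ) ≤ (m:ℝ) - 1 := by
  intro i hi
  have : i + 1 ≤ m := Finset.mem_range.mp hi
  have : ((i:ℝ)) + 1 ≤ m := by exact_mod_cast this
  linarith

theorem cast_le_Ico {t s : ℕ} : ∀ i ∈ Finset.Ico t s, (i:ℝ) ≤ (s:ℝ) - 1 := by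
  intro i hi
  have : i + 1 ≤ s := (Finset.mem_Ico.mp hi).2
  have : ((i:ℝ)) + 1 ≤ s := by exact_mod_cast this
  linarith

theorem pr_split (hts : t ≤ s) (x : ℝ) :
    pr (Finset.range s) x = pr (Finset.range t) x * pr (Finset.Ico t s) x := by
  rw [pr, pr, pr, Finset.range_eq_Ico]
  rw [← Finset.prod_Ico_consecutive _ (Nat.zero_le t) hts]
  rw [← Finset.range_eq_Ico]

theorem dpr_split (hts : t ≤ s) (x : ℝ) :
    dpr (Finset.range s) x =
      dpr (Finset.range t) x * pr (Finset.Ico t s) x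
        + pr (Finset.range t) x * dpr (Finset.Ico t s) x := by
  have h1 : HasDerivAt (pr (Finset.range s)) (dpr (Finset.range s) x) x := hasDerivAt_pr _ _
  have h2 : HasDerivAt (pr (Finset.range s))
      (dpr (Finset.range t) x * pr (Finset.Ico t s) x
        + pr (Finset.range t) x * dpr (Finset.Ico t s) x) x := by
    have := (hasDerivAt_pr (Finset.range t) x).mul (hasDerivAt_pr (Finset.Ico t s) x)
    refine HasDerivAt.congr_of_eventuallyEq this ?_
    filter_upwards with y
    exact pr_split hts y
  exact h1.unique h2

/-- strict monotonicity of `x ↦ dpr (range s) x / dpr (range t) x` on `[s-1, ∞)`. -/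
theorem phi_strictMono (ht : 1 ≤ t) (hts : t < s) :
    StrictMonoOn (fun x => dpr (Finset.range s) x / dpr (Finset.range t) x)
      (Set.Ici ((s:ℝ) - 1)) := by
  intro x hx y hy hxy
  simp only [Set.mem_Ici] at hx hy
  have hts' : (t:ℝ) < s := by exact_mod_cast hts
  have htx : (t:ℝ) - 1 < x := by linarith
  have hty : (t:ℝ) - 1 < y := by linarith
  have hDtx : 0 < dpr (Finset.range t) x :=
    dpr_pos cast_le_range ⟨0, Finset.mem_range.mpr ht⟩ htx.le
  have hDty : 0 < dpr (Finset.range t) y :=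
    dpr_pos cast_le_range ⟨0, Finset.mem_range.mpr ht⟩ hty.le
  have hPtx : 0 < pr (Finset.range t) x := pr_pos cast_le_range htx
  have hPty : 0 < pr (Finset.range t) y := pr_pos cast_le_range hty
  have hIcoNe : (Finset.Ico t s).Nonempty := ⟨t, Finset.mem_Ico.mpr ⟨le_refl t, hts⟩⟩
  -- rewrite both sides
  have key : ∀ z : ℝ, 0 < dpr (Finset.range t) z →
      dpr (Finset.range s) z / dpr (Finset.range t) z
        = pr (Finset.Ico t s) z
          + (pr (Finset.range t) z / dpr (Finset.range t) z) * dpr (Finset.Ico t s) z := by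
    intro z hz
    rw [dpr_split hts.le]
    field_simp
  simp only [key x hDtx, key y hDty]
  have h1 : pr (Finset.Ico t s) x < pr (Finset.Ico t s) y :=
    pr_lt_pr cast_le_Ico hIcoNe hx hxy
  have h2 : pr (Finset.range t) x / dpr (Finset.range t) x
      ≤ pr (Finset.range t) y / dpr (Finset.range t) y :=
    ratio_mono cast_le_range ⟨0, Finset.mem_range.mpr ht⟩ htx hxy.le
  have h3 : dpr (Finset.Ico t s) x ≤ dpr (Finset.Ico t s) y :=
    dpr_le_dpr cast_le_Ico hx hxy.le
  have h4 : 0 ≤ dpr (Finset.Ico t s) x := dpr_nonneg cast_le_Ico hx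
  have h5 : 0 ≤ pr (Finset.range t) x / dpr (Finset.range t) x :=
    div_nonneg hPtx.le hDtx.le
  have h6 : 0 ≤ pr (Finset.range t) y / dpr (Finset.range t) y :=
    div_nonneg hPty.le hDty.le
  have := mul_le_mul h2 h3 h4 h6
  linarith

theorem phi_monoOn (ht : 1 ≤ t) (hts : t < s) :
    MonotoneOn (fun x => dpr (Finset.range s) x / dpr (Finset.range t) x)
      (Set.Ici ((s:ℝ) - 1)) :=
  (phi_strictMono ht hts).monotoneOn

end TS


end ConvAux


namespace ConvAux

theorem fm_eq {m : ℕ} {x : ℝ} (h : (m:ℝ) - 1 ≤ x) :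
    fm m x = pr (Finset.range m) x / (m.factorial : ℝ) := by
  rw [fm, if_pos h]; rfl

theorem fm_nonneg {m : ℕ} {x : ℝ} (h : (m:ℝ) - 1 ≤ x) : 0 ≤ fm m x := by
  rw [fm_eq h]
  exact div_nonneg (pr_nonneg cast_le_range h) (by positivity)

theorem fm_strictMonoOn (m : ℕ) (hm : 1 ≤ m) :
    StrictMonoOn (fm m) (Set.Ici ((m:ℝ) - 1)) := by
  intro x hx y hy hxy
  simp only [Set.mem_Ici] at hx hy
  rw [fm_eq hx, fm_eq hy]
  have hf : (0:ℝ) < (m.factorial : ℝ) := by positivity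
  apply div_lt_div_of_pos_right ?_ hf
  exact pr_lt_pr cast_le_range ⟨0, Finset.mem_range.mpr hm⟩ hx hxy

theorem fm_cast {t n : ℕ} (h : t ≤ n) : fm t ((n:ℝ)) = (n.choose t : ℝ) := by
  have h1 : ((t:ℝ)) - 1 ≤ (n:ℝ) := by
    have : (t:ℝ) ≤ n := by exact_mod_cast h
    linarith
  rw [fm_eq h1, pr]
  have : ∏ i ∈ Finset.range t, ((n:ℝ) - (i:ℝ)) = ((n.descFactorial t : ℕ) : ℝ) := by
    rw [Nat.descFactorial_eq_prod_range]
    push_cast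
    refine Finset.prod_congr rfl fun i hi => ?_
    have hin : i ≤ n := le_trans (Nat.le_of_lt_succ (Nat.lt_succ_of_lt (Finset.mem_range.mp hi))) h
    rw [Nat.cast_sub hin]
  rw [this, Nat.descFactorial_eq_factorial_mul_choose]
  push_cast
  rw [mul_comm, mul_div_assoc, div_self (by positivity), mul_one]


noncomputable def psi (t s : ℕ) (v : ℝ) : ℝ :=
  (dpr (Finset.range s) v / (s.factorial : ℝ)) * (dpr (Finset.range t) v / (t.factorial : ℝ))⁻¹

theorem psi_eq {t s : ℕ} (ht : 1 ≤ t) (hts : t < s) {v : ℝ} (hv : (s:ℝ) - 1 ≤ v) :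
    psi t s v = ((t.factorial : ℝ) / (s.factorial : ℝ)) *
      (dpr (Finset.range s) v / dpr (Finset.range t) v) := by
  have htsR : (t:ℝ) < (s:ℝ) := by exact_mod_cast hts
  have hDt : 0 < dpr (Finset.range t) v :=
    dpr_pos cast_le_range ⟨0, Finset.mem_range.mpr ht⟩ (by linarith)
  have h1 : (t.factorial : ℝ) ≠ 0 := by positivity
  have h2 : (s.factorial : ℝ) ≠ 0 := by positivity
  rw [psi]
  field_simp

theorem psi_strictMono {t s : ℕ} (ht : 1 ≤ t) (hts : t < s) :
    StrictMonoOn (psi t s) (Set.Ici ((s:ℝ) - 1)) := by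
  intro x hx y hy hxy
  rw [psi_eq ht hts hx, psi_eq ht hts hy]
  have hphi := phi_strictMono ht hts hx hy hxy
  have hc : (0:ℝ) < (t.factorial : ℝ) / (s.factorial : ℝ) := by positivity
  exact mul_lt_mul_of_pos_left hphi hc

theorem psi_pos {t s : ℕ} (ht : 1 ≤ t) (hts : t < s) : 0 < psi t s ((s:ℝ) - 1) := by
  have htsR : (t:ℝ) < (s:ℝ) := by exact_mod_cast hts
  have hs : 1 ≤ s := ht.trans hts.le
  rw [psi_eq ht hts le_rfl]
  have h1 : 0 < dpr (Finset.range s) ((s:ℝ) - 1) :=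
    dpr_pos cast_le_range ⟨0, Finset.mem_range.mpr hs⟩ le_rfl
  have h2 : 0 < dpr (Finset.range t) ((s:ℝ) - 1) :=
    dpr_pos cast_le_range ⟨0, Finset.mem_range.mpr ht⟩ (by linarith)
  have hc : (0:ℝ) < (t.factorial : ℝ) / (s.factorial : ℝ) := by positivity
  exact mul_pos hc (div_pos h1 h2)

end ConvAux


open ConvAux

/-- Lemma 2.2: `f_s ∘ f_t⁻¹` is convex on `(0,∞)` and strictly convex on
`(C(s-1,t), ∞)`. The inverse `f_t⁻¹` of the restriction of `f_t` to `[t-1,∞)` is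
characterized by `finv y ≥ t - 1` and `f_t (finv y) = y` for `y ≥ 0`. -/
theorem convexity_lemma (t s : ℕ) (ht : 1 ≤ t) (hts : t < s)
    (finv : ℝ → ℝ)
    (hinv : ∀ y : ℝ, 0 ≤ y → (t : ℝ) - 1 ≤ finv y ∧ fm t (finv y) = y) :
    ConvexOn ℝ (Set.Ioi (0 : ℝ)) (fun x => fm s (finv x)) ∧
      StrictConvexOn ℝ (Set.Ioi (((s - 1).choose t : ℕ) : ℝ))
        (fun x => fm s (finv x)) := by
  classical
  have hs : 1 ≤ s := ht.trans hts.le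
  have hts1 : t ≤ s - 1 := Nat.le_sub_one_of_lt hts
  have htsR : (t:ℝ) < (s:ℝ) := by exact_mod_cast hts
  have htu0 : (t:ℝ) - 1 < (s:ℝ) - 1 := by linarith
  have htu0' : (t:ℝ) - 1 ≤ (s:ℝ) - 1 := htu0.le
  set x0 : ℝ := (((s - 1).choose t : ℕ) : ℝ) with hx0def
  have hcast : ((s - 1 : ℕ) : ℝ) = (s:ℝ) - 1 := by
    push_cast [Nat.cast_sub hs]; ring
  have hfmx0 : fm t ((s:ℝ) - 1) = x0 := by
    rw [← hcast, fm_cast hts1, hx0def]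
  have hx0pos : (0:ℝ) < x0 := by
    rw [hx0def]; exact_mod_cast Nat.choose_pos hts1
  have Sfm := fm_strictMonoOn t ht
  have Mfm := Sfm.monotoneOn
  have hfinv1 : ∀ y : ℝ, 0 ≤ y → (t:ℝ) - 1 ≤ finv y := fun y hy => (hinv y hy).1
  have hfinv2 : ∀ y : ℝ, 0 ≤ y → fm t (finv y) = y := fun y hy => (hinv y hy).2
  have key1 : ∀ {y z : ℝ}, 0 ≤ y → (t:ℝ) - 1 ≤ z → (y ≤ fm t z ↔ finv y ≤ z) := by
    intro y z hy hz
    constructor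
    · intro h
      by_contra hc
      push_neg at hc
      have := Sfm (Set.mem_Ici.mpr hz) (Set.mem_Ici.mpr (hfinv1 y hy)) hc
      rw [hfinv2 y hy] at this
      linarith
    · intro h
      have := Mfm (Set.mem_Ici.mpr (hfinv1 y hy)) (Set.mem_Ici.mpr hz) h
      rwa [hfinv2 y hy] at this
  have key2 : ∀ {y z : ℝ}, 0 ≤ y → (t:ℝ) - 1 ≤ z → (fm t z ≤ y ↔ z ≤ finv y) := by
    intro y z hy hz
    constructor
    · intro h
      by_contra hc
      push_neg at hc
      have := Sfm (Set.mem_Ici.mpr (hfinv1 y hy)) (Set.mem_Ici.mpr hz) hc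
      rw [hfinv2 y hy] at this
      linarith
    · intro h
      have := Mfm (Set.mem_Ici.mpr hz) (Set.mem_Ici.mpr (hfinv1 y hy)) h
      rwa [hfinv2 y hy] at this
  have key3 : ∀ {y z : ℝ}, 0 ≤ y → (t:ℝ) - 1 ≤ z → (y < fm t z ↔ finv y < z) := by
    intro y z hy hz
    rw [← not_le, ← not_le, key2 hy hz]
  have key4 : ∀ {y z : ℝ}, 0 ≤ y → (t:ℝ) - 1 ≤ z → (fm t z < y ↔ z < finv y) := by
    intro y z hy hz
    rw [← not_le, ← not_le, key1 hy hz]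
  have hfinv_fm : ∀ {z : ℝ}, (t:ℝ) - 1 ≤ z → finv (fm t z) = z := by
    intro z hz
    have h0 : 0 ≤ fm t z := fm_nonneg hz
    exact le_antisymm ((key1 h0 hz).mp le_rfl) ((key2 h0 hz).mp le_rfl)
  have hfinv0 : finv x0 = (s:ℝ) - 1 := by rw [← hfmx0, hfinv_fm htu0']
  -- continuity of finv
  have hcont : ∀ a : ℝ, 0 < a → ContinuousAt finv a := by
    intro a ha
    rw [ContinuousAt]
    apply tendsto_order.2
    constructor
    · intro l hl
      by_cases hlt : (t:ℝ) - 1 ≤ l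
      · have hb : fm t l < a := by
          rw [← hfinv2 a ha.le]
          exact Sfm (Set.mem_Ici.mpr hlt) (Set.mem_Ici.mpr (hfinv1 a ha.le)) hl
        have hb0 : 0 ≤ fm t l := fm_nonneg hlt
        filter_upwards [eventually_gt_nhds hb] with y hy
        exact (key4 (hb0.trans hy.le) hlt).mp hy
      · push_neg at hlt
        filter_upwards [eventually_gt_nhds ha] with y hy
        exact lt_of_lt_of_le hlt (hfinv1 y hy.le)
    · intro u hu
      have hut : (t:ℝ) - 1 ≤ u := (hfinv1 a ha.le).trans hu.le
      have hb : a < fm t u := by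
        rw [← hfinv2 a ha.le]
        exact Sfm (Set.mem_Ici.mpr (hfinv1 a ha.le)) (Set.mem_Ici.mpr hut) hu
      filter_upwards [eventually_lt_nhds hb, eventually_gt_nhds ha] with y hy1 hy2
      exact (key3 hy2.le hut).mp hy1
  -- derivative of finv
  have hfinvD : ∀ a : ℝ, 0 < a →
      HasDerivAt finv (dpr (Finset.range t) (finv a) / (t.factorial : ℝ))⁻¹ a := by
    intro a ha
    have hDt : 0 < dpr (Finset.range t) (finv a) / (t.factorial : ℝ) :=
      div_pos (dpr_pos cast_le_range ⟨0, Finset.mem_range.mpr ht⟩ (hfinv1 a ha.le))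
        (by positivity)
    apply HasDerivAt.of_local_left_inverse (hcont a ha)
      ((hasDerivAt_pr (Finset.range t) (finv a)).div_const _) (ne_of_gt hDt)
    filter_upwards [eventually_gt_nhds ha] with y hy
    rw [← fm_eq (hfinv1 y hy.le)]
    exact hfinv2 y hy.le
  -- derivative of the smooth composite
  have hcompD : ∀ a : ℝ, 0 < a →
      HasDerivAt (fun y => pr (Finset.range s) (finv y) / (s.factorial : ℝ))
        (psi t s (finv a)) a := by
    intro a ha
    have := HasDerivAt.comp a
      ((hasDerivAt_pr (Finset.range s) (finv a)).div_const (s.factorial : ℝ)) (hfinvD a ha)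
    simpa [Function.comp_def, psi] using this
  -- values of g
  have hg_top : ∀ y : ℝ, x0 ≤ y →
      fm s (finv y) = pr (Finset.range s) (finv y) / (s.factorial : ℝ) := by
    intro y hy
    have h0y : (0:ℝ) ≤ y := hx0pos.le.trans hy
    have hle : (s:ℝ) - 1 ≤ finv y := by
      rw [← hfmx0] at hy
      exact (key2 h0y htu0').mp hy
    exact fm_eq hle
  have hfinv_gt : ∀ y : ℝ, x0 < y → (s:ℝ) - 1 < finv y := by
    intro y hy
    have h0y : (0:ℝ) ≤ y := (hx0pos.trans hy).le
    rw [← hfmx0] at hy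
    exact (key4 h0y htu0').mp hy
  have hpr_u0 : pr (Finset.range s) ((s:ℝ) - 1) = 0 := by
    rw [pr]
    apply Finset.prod_eq_zero (Finset.mem_range.mpr (Nat.sub_lt hs zero_lt_one))
    rw [hcast]
    ring
  have hg_zero : ∀ y : ℝ, 0 < y → y ≤ x0 → fm s (finv y) = 0 := by
    intro y hy hyx
    rcases eq_or_lt_of_le hyx with heq | hlt
    · rw [heq, hg_top x0 le_rfl, hfinv0, hpr_u0, zero_div]
    · have hlt2 : finv y < (s:ℝ) - 1 := by
        rw [← hfmx0] at hlt
        exact (key3 hy.le htu0').mp hlt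
      rw [fm, if_neg (not_le.mpr hlt2)]
  -- strict convexity on Ioi x0
  have hgD : ∀ a : ℝ, x0 < a →
      HasDerivAt (fun x => fm s (finv x)) (psi t s (finv a)) a := by
    intro a haX
    have ha : 0 < a := hx0pos.trans haX
    refine (hcompD a ha).congr_of_eventuallyEq ?_
    filter_upwards [eventually_gt_nhds haX] with y hy
    exact hg_top y hy.le
  have strict : StrictConvexOn ℝ (Set.Ioi x0) (fun x => fm s (finv x)) := by
    apply StrictMonoOn.strictConvexOn_of_deriv (convex_Ioi x0)
    · intro a ha
      exact ((hgD a (Set.mem_Ioi.mp ha)).continuousAt).continuousWithinAt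
    · rw [interior_Ioi]
      intro a ha b hb hab
      have ha' := Set.mem_Ioi.mp ha
      have hb' := Set.mem_Ioi.mp hb
      rw [(hgD a ha').deriv, (hgD b hb').deriv]
      have h0b : (0:ℝ) ≤ b := (hx0pos.trans hb').le
      have h3 : finv a < finv b :=
        (key3 (hx0pos.trans ha').le (hfinv1 b h0b)).mp (by rw [hfinv2 b h0b]; exact hab)
      exact psi_strictMono ht hts (Set.mem_Ici.mpr (hfinv_gt a ha').le)
        (Set.mem_Ici.mpr (hfinv_gt b hb').le) h3
  -- the convex auxiliary function h
  have hc0pos : 0 < psi t s ((s:ℝ) - 1) := psi_pos ht hts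
  set c0 : ℝ := psi t s ((s:ℝ) - 1) with hc0def
  set h : ℝ → ℝ := fun x => if x ≤ x0 then c0 * (x - x0) else fm s (finv x) with hhdef
  have hhD : ∀ a : ℝ, 0 < a → HasDerivAt h (if a ≤ x0 then c0 else psi t s (finv a)) a := by
    intro a ha
    rcases lt_trichotomy a x0 with hax | heq | hax
    · rw [if_pos hax.le]
      have lin : HasDerivAt (fun y => c0 * (y - x0)) c0 a := by
        simpa using ((hasDerivAt_id a).sub_const x0).const_mul c0
      refine lin.congr_of_eventuallyEq ?_
      filter_upwards [eventually_lt_nhds hax] with y hy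
      simp only [hhdef, if_pos hy.le]
    · subst heq
      rw [if_pos le_rfl]
      have hIic : HasDerivWithinAt h c0 (Set.Iic x0) x0 := by
        have lin : HasDerivWithinAt (fun y => c0 * (y - x0)) c0 (Set.Iic x0) x0 := by
          exact (by simpa using ((hasDerivAt_id x0).sub_const x0).const_mul c0 :
            HasDerivAt (fun y => c0 * (y - x0)) c0 x0).hasDerivWithinAt
        refine lin.congr (fun y hy => ?_) ?_
        · simp only [hhdef, if_pos (Set.mem_Iic.mp hy)]
        · simp only [hhdef, if_pos le_rfl]
      have hIci : HasDerivWithinAt h c0 (Set.Ici x0) x0 := by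
        have hc : HasDerivAt (fun y => pr (Finset.range s) (finv y) / (s.factorial : ℝ))
            c0 x0 := by
          have := hcompD x0 ha
          rwa [hfinv0] at this
        refine hc.hasDerivWithinAt.congr (fun y hy => ?_) ?_
        · rcases eq_or_lt_of_le (Set.mem_Ici.mp hy) with heq2 | hlt
          · rw [← heq2]
            simp only [hhdef, if_pos le_rfl, hfinv0, hpr_u0, zero_div, sub_self, mul_zero]
          · simp only [hhdef, if_neg (not_le.mpr hlt)]
            exact hg_top y hlt.le
        · simp only [hhdef, if_pos le_rfl, hfinv0, hpr_u0, zero_div, sub_self, mul_zero]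
      have hu := hIic.union hIci
      rw [Set.Iic_union_Ici] at hu
      exact hasDerivWithinAt_univ.mp hu
    · rw [if_neg (not_le.mpr hax)]
      refine (hcompD a ha).congr_of_eventuallyEq ?_
      filter_upwards [eventually_gt_nhds hax] with y hy
      simp only [hhdef, if_neg (not_le.mpr hy)]
      exact hg_top y hy.le
  have hmono : MonotoneOn (deriv h) (Set.Ioi (0:ℝ)) := by
    intro a ha b hb hab
    have ha' := Set.mem_Ioi.mp ha
    have hb' := Set.mem_Ioi.mp hb
    rw [(hhD a ha').deriv, (hhD b hb').deriv]
    by_cases hbx : b ≤ x0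
    · rw [if_pos (hab.trans hbx), if_pos hbx]
    · push_neg at hbx
      rw [if_neg (not_le.mpr hbx)]
      have hub : (s:ℝ) - 1 ≤ finv b := (hfinv_gt b hbx).le
      by_cases hax : a ≤ x0
      · rw [if_pos hax, hc0def]
        exact (psi_strictMono ht hts).monotoneOn (Set.mem_Ici.mpr le_rfl)
          (Set.mem_Ici.mpr hub) hub
      · push_neg at hax
        rw [if_neg (not_le.mpr hax)]
        have hua : (s:ℝ) - 1 ≤ finv a := (hfinv_gt a hax).le
        have hfab : finv a ≤ finv b :=
          (key1 ha'.le (hfinv1 b hb'.le)).mp (by rw [hfinv2 b hb'.le]; exact hab)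
        exact (psi_strictMono ht hts).monotoneOn (Set.mem_Ici.mpr hua)
          (Set.mem_Ici.mpr hub) hfab
  have hconvh : ConvexOn ℝ (Set.Ioi (0:ℝ)) h := by
    apply MonotoneOn.convexOn_of_deriv (convex_Ioi 0)
    · intro a ha
      exact ((hhD a (Set.mem_Ioi.mp ha)).continuousAt).continuousWithinAt
    · rw [interior_Ioi]
      intro a ha
      exact ((hhD a (Set.mem_Ioi.mp ha)).differentiableAt).differentiableWithinAt
    · rw [interior_Ioi]
      exact hmono
  have hmax : ∀ x ∈ Set.Ioi (0:ℝ), fm s (finv x) = max (h x) 0 := by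
    intro x hx
    have hx' := Set.mem_Ioi.mp hx
    by_cases hxx : x ≤ x0
    · rw [hg_zero x hx' hxx]
      simp only [hhdef, if_pos hxx]
      rw [max_eq_right (by nlinarith)]
    · push_neg at hxx
      simp only [hhdef, if_neg (not_le.mpr hxx)]
      rw [max_eq_left]
      rw [hg_top x hxx.le]
      exact div_nonneg (pr_nonneg cast_le_range (hfinv_gt x hxx).le) (by positivity)
  have hconvg : ConvexOn ℝ (Set.Ioi (0:ℝ)) (fun x => fm s (finv x)) := by
    have hsup := hconvh.sup (convexOn_const (0:ℝ) (convex_Ioi 0))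
    refine ⟨convex_Ioi 0, ?_⟩
    intro x hx y hy a b hA hB hab
    have hmem := (convex_Ioi (0:ℝ)) hx hy hA hB hab
    have hval := hsup.2 hx hy hA hB hab
    simp only [Pi.sup_apply] at hval
    simpa only [hmax _ hx, hmax _ hy, hmax _ hmem] using hval
  exact ⟨hconvg, strict⟩
end

section
/- Let r ≥ 1 and t ≥ 2 be integers and let n ≥ t + 1. If G is a graph on n vertices containing no K_{r+1}, and s_t(G) is maximal among all K_{r+1}-free graphs on n vertices, then non-adjacency is an equivalence relation on V(G); that is, G is a complete multipartite graph. -/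
open SimpleGraph Finset

private lemma pascal2 (k e : ℕ) :
    (e + 2).choose (k + 2) + e.choose (k + 2)
      = 2 * ((e + 1).choose (k + 2)) + e.choose k := by
  have h1 : (e + 2).choose (k + 2) = (e + 1).choose (k + 1) + (e + 1).choose (k + 2) :=
    Nat.choose_succ_succ' _ _
  have h2 : (e + 1).choose (k + 1) = e.choose k + e.choose (k + 1) :=
    Nat.choose_succ_succ' _ _
  have h3 : (e + 1).choose (k + 2) = e.choose (k + 1) + e.choose (k + 2) :=
    Nat.choose_succ_succ' _ _
  omega

section RV

variable {n : ℕ} (G : SimpleGraph (Fin n)) [DecidableRel G.Adj] (s u : Fin n)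

private lemma deg_rv_fst (h : ¬G.Adj s u) : (G.replaceVertex s u).degree s = G.degree s := by
  unfold SimpleGraph.degree
  congr 1
  ext v
  by_cases hv : v = u
  · rw [hv]
    simp only [mem_neighborFinset]
    exact iff_of_false (G.not_adj_replaceVertex_same s u) h
  · simp only [mem_neighborFinset]
    exact G.adj_replaceVertex_iff_of_ne_left s hv

private lemma deg_rv_snd (h : ¬G.Adj s u) : (G.replaceVertex s u).degree u = G.degree s := by
  unfold SimpleGraph.degree
  congr 1
  ext v
  by_cases hv : v = u
  · rw [hv]
    simp only [mem_neighborFinset]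
    exact iff_of_false ((G.replaceVertex s u).irrefl) h
  · simp only [mem_neighborFinset]
    exact G.adj_replaceVertex_iff_of_ne_right s hv

private lemma deg_rv_other {w : Fin n} (hws : w ≠ s) (hwu : w ≠ u) :
    (G.replaceVertex s u).degree w + (if G.Adj u w then 1 else 0)
      = G.degree w + (if G.Adj s w then 1 else 0) := by
  have hadj : ∀ v, v ≠ u → ((G.replaceVertex s u).Adj w v ↔ G.Adj w v) := fun v hv =>
    G.adj_replaceVertex_iff_of_ne s hwu hv
  have hadju : ((G.replaceVertex s u).Adj w u ↔ G.Adj s w) := by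
    rw [adj_comm, G.adj_replaceVertex_iff_of_ne_right s hwu, adj_comm]
  have hGwu : G.Adj w u ↔ G.Adj u w := adj_comm G w u
  unfold SimpleGraph.degree
  by_cases has : G.Adj s w <;> by_cases hau : G.Adj u w
  · have he : (G.replaceVertex s u).neighborFinset w = G.neighborFinset w := by
      ext v
      by_cases hv : v = u
      · rw [hv]
        simp only [mem_neighborFinset, hadju, hGwu]
        exact iff_of_true has hau
      · simp only [mem_neighborFinset]; exact hadj v hv
    rw [he]
    simp [has, hau]
  · have he : (G.replaceVertex s u).neighborFinset w = insert u (G.neighborFinset w) := by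
      ext v
      by_cases hv : v = u
      · rw [hv]
        simp only [mem_neighborFinset, hadju, mem_insert, true_or, has]
      · simp only [mem_neighborFinset, mem_insert, hv, false_or]
        exact hadj v hv
    have hnm : u ∉ G.neighborFinset w := by
      simp only [mem_neighborFinset, hGwu]; exact hau
    rw [he, Finset.card_insert_of_notMem hnm]
    simp [has, hau]
  · have he : (G.replaceVertex s u).neighborFinset w = (G.neighborFinset w).erase u := by
      ext v
      by_cases hv : v = u
      · rw [hv]
        simp only [mem_neighborFinset, hadju, Finset.mem_erase, ne_eq, not_true_eq_false,
          false_and]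
        exact iff_of_false has id
      · simp only [mem_neighborFinset, Finset.mem_erase, ne_eq, hv, not_false_iff, true_and]
        exact hadj v hv
    have hm : u ∈ G.neighborFinset w := by
      simp only [mem_neighborFinset, hGwu]; exact hau
    rw [he, ← Finset.card_erase_add_one hm]
    simp [has, hau]
  · have he : (G.replaceVertex s u).neighborFinset w = G.neighborFinset w := by
      ext v
      by_cases hv : v = u
      · rw [hv]
        simp only [mem_neighborFinset, hadju, hGwu]
        exact iff_of_false has hau
      · simp only [mem_neighborFinset]; exact hadj v hv
    rw [he]
    simp [has, hau]

end RV

private lemma key {r t n : ℕ} (ht : 2 ≤ t)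
    (G : SimpleGraph (Fin n)) [DecidableRel G.Adj]
    (hfree : G.CliqueFree (r + 1))
    (hmax : ∀ (H : SimpleGraph (Fin n)) [DecidableRel H.Adj], H.CliqueFree (r + 1) →
      ∑ v, (H.degree v).choose t ≤ ∑ v, (G.degree v).choose t)
    {s u : Fin n} (hne : s ≠ u) (hna : ¬G.Adj s u) :
    (G.degree s).choose t = (G.degree u).choose t ∧
      ∀ w, G.Adj s w → ¬G.Adj u w → G.degree w + 2 ≤ t := by
  obtain ⟨k, rfl⟩ : ∃ k, t = k + 2 := ⟨t - 2, by omega⟩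
  have hna' : ¬G.Adj u s := fun h => hna h.symm
  set H1 := G.replaceVertex s u with hH1
  set H2 := G.replaceVertex u s with hH2
  have hA : ∑ v, (H1.degree v).choose (k + 2) ≤ ∑ v, (G.degree v).choose (k + 2) :=
    hmax H1 (hfree.replaceVertex s u)
  have hB : ∑ v, (H2.degree v).choose (k + 2) ≤ ∑ v, (G.degree v).choose (k + 2) :=
    hmax H2 (hfree.replaceVertex u s)
  set R : Finset (Fin n) := (Finset.univ.erase s).erase u with hR
  have huR : u ∈ Finset.univ.erase s := Finset.mem_erase.2 ⟨hne.symm, Finset.mem_univ u⟩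
  have hmemR : ∀ w, w ≠ s → w ≠ u → w ∈ R := fun w hws hwu =>
    Finset.mem_erase.2 ⟨hwu, Finset.mem_erase.2 ⟨hws, Finset.mem_univ w⟩⟩
  have hsplit : ∀ g : Fin n → ℕ, ∑ v, g v = (∑ v ∈ R, g v + g u) + g s := by
    intro g
    rw [Finset.sum_erase_add _ _ huR, Finset.sum_erase_add _ _ (Finset.mem_univ s)]
  -- degrees at s and u
  have h1s : H1.degree s = G.degree s := deg_rv_fst G s u hna
  have h1u : H1.degree u = G.degree s := deg_rv_snd G s u hna
  have h2s : H2.degree s = G.degree u := deg_rv_snd G u s hna'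
  have h2u : H2.degree u = G.degree u := deg_rv_fst G u s hna'
  -- pointwise convexity on R
  have hpt : ∀ w ∈ R, 2 * (G.degree w).choose (k + 2)
      ≤ (H1.degree w).choose (k + 2) + (H2.degree w).choose (k + 2) := by
    intro w hw
    obtain ⟨hwu, hws⟩ : w ≠ u ∧ w ≠ s := by
      have h1 := Finset.mem_erase.1 hw
      have h2 := Finset.mem_erase.1 h1.2
      exact ⟨h1.1, h2.1⟩
    have e1 : H1.degree w + (if G.Adj u w then 1 else 0)
        = G.degree w + (if G.Adj s w then 1 else 0) := deg_rv_other G s u hws hwu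
    have e2 : H2.degree w + (if G.Adj s w then 1 else 0)
        = G.degree w + (if G.Adj u w then 1 else 0) := deg_rv_other G u s hwu hws
    by_cases has : G.Adj s w <;> by_cases hau : G.Adj u w <;>
      simp only [has, hau, if_true, if_false] at e1 e2
    · rw [show H1.degree w = G.degree w by omega, show H2.degree w = G.degree w by omega]
      omega
    · have hd1 : H1.degree w = H2.degree w + 2 := by omega
      have hd : G.degree w = H2.degree w + 1 := by omega
      rw [hd1, hd]
      have := pascal2 k (H2.degree w)
      omega
    · have hd2 : H2.degree w = H1.degree w + 2 := by omega
      have hd : G.degree w = H1.degree w + 1 := by omega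
      rw [hd2, hd]
      have := pascal2 k (H1.degree w)
      omega
    · rw [show H1.degree w = G.degree w by omega, show H2.degree w = G.degree w by omega]
      omega
  -- totals
  set SR := ∑ v ∈ R, (G.degree v).choose (k + 2) with hSR
  set AR := ∑ v ∈ R, (H1.degree v).choose (k + 2) with hAR
  set BR := ∑ v ∈ R, (H2.degree v).choose (k + 2) with hBR
  rw [hsplit, hsplit (fun v => (G.degree v).choose (k + 2)), h1s, h1u] at hA
  rw [hsplit, hsplit (fun v => (G.degree v).choose (k + 2)), h2s, h2u] at hB
  have hsum : AR + BR = ∑ v ∈ R, ((H1.degree v).choose (k + 2) + (H2.degree v).choose (k + 2)) :=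
    (Finset.sum_add_distrib).symm
  have hge : ∑ v ∈ R, 2 * (G.degree v).choose (k + 2)
      ≤ ∑ v ∈ R, ((H1.degree v).choose (k + 2) + (H2.degree v).choose (k + 2)) :=
    Finset.sum_le_sum hpt
  have hSR2 : ∑ v ∈ R, 2 * (G.degree v).choose (k + 2) = 2 * SR := by
    rw [hSR, Finset.mul_sum]
  have heqtot : ∑ v ∈ R, 2 * (G.degree v).choose (k + 2)
      = ∑ v ∈ R, ((H1.degree v).choose (k + 2) + (H2.degree v).choose (k + 2)) := by
    omega
  have hpteq : ∀ w ∈ R, 2 * (G.degree w).choose (k + 2)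
      = (H1.degree w).choose (k + 2) + (H2.degree w).choose (k + 2) :=
    (Finset.sum_eq_sum_iff_of_le hpt).1 heqtot
  -- second claim
  have claim2 : ∀ w, G.Adj s w → ¬G.Adj u w → G.degree w + 2 ≤ k + 2 := by
    intro w hsw huw
    have hws : w ≠ s := fun h => G.irrefl (h ▸ hsw)
    have hwu : w ≠ u := fun h => hna (h ▸ hsw)
    have hw : w ∈ R := hmemR w hws hwu
    have e1 : H1.degree w + (if G.Adj u w then 1 else 0)
        = G.degree w + (if G.Adj s w then 1 else 0) := deg_rv_other G s u hws hwu
    have e2 : H2.degree w + (if G.Adj s w then 1 else 0)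
        = G.degree w + (if G.Adj u w then 1 else 0) := deg_rv_other G u s hwu hws
    simp only [hsw, huw, if_true, if_false] at e1 e2
    have hpe := hpteq w hw
    have hd1 : H1.degree w = H2.degree w + 2 := by omega
    have hd : G.degree w = H2.degree w + 1 := by omega
    rw [hd1, hd] at hpe
    have := pascal2 k (H2.degree w)
    have hzero : (H2.degree w).choose k = 0 := by omega
    have := Nat.choose_eq_zero_iff.1 hzero
    omega
  refine ⟨?_, claim2⟩
  -- first claim : AR = SR, then cancel
  have hAReq : AR = SR := by
    rw [hAR, hSR]
    refine Finset.sum_congr rfl ?_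
    intro w hw
    obtain ⟨hwu, hws⟩ : w ≠ u ∧ w ≠ s := by
      have h1 := Finset.mem_erase.1 hw
      have h2 := Finset.mem_erase.1 h1.2
      exact ⟨h1.1, h2.1⟩
    have e1 : H1.degree w + (if G.Adj u w then 1 else 0)
        = G.degree w + (if G.Adj s w then 1 else 0) := deg_rv_other G s u hws hwu
    have e2 : H2.degree w + (if G.Adj s w then 1 else 0)
        = G.degree w + (if G.Adj u w then 1 else 0) := deg_rv_other G u s hwu hws
    have hpe := hpteq w hw
    by_cases has : G.Adj s w <;> by_cases hau : G.Adj u w <;>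
      simp only [has, hau, if_true, if_false] at e1 e2
    · rw [show H1.degree w = G.degree w by omega]
    · -- H1 deg = d+1, H2 deg = d-1, equality forces small degree
      have hd1 : H1.degree w = H2.degree w + 2 := by omega
      have hd : G.degree w = H2.degree w + 1 := by omega
      rw [hd1, hd] at hpe ⊢
      have := pascal2 k (H2.degree w)
      have hzero : (H2.degree w).choose k = 0 := by omega
      have hlt := Nat.choose_eq_zero_iff.1 hzero
      rw [Nat.choose_eq_zero_of_lt (by omega), Nat.choose_eq_zero_of_lt (by omega)]
    · have hd2 : H2.degree w = H1.degree w + 2 := by omega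
      have hd : G.degree w = H1.degree w + 1 := by omega
      rw [hd2, hd] at hpe
      have := pascal2 k (H1.degree w)
      have hzero : (H1.degree w).choose k = 0 := by omega
      have hlt := Nat.choose_eq_zero_iff.1 hzero
      rw [hd]
      rw [Nat.choose_eq_zero_of_lt (by omega), Nat.choose_eq_zero_of_lt (by omega)]
    · rw [show H1.degree w = G.degree w by omega]
  -- also BR = SR by a symmetric argument is not needed; use hA, hB and hge
  have hBRge : SR ≤ BR := by
    have : 2 * SR ≤ AR + BR := by omega
    omega
  omega

/-- The improved graph: high degree vertices keep adjacency from `G`, high-low pairs are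
all adjacent, `x` is adjacent to everything, other low pairs are non-adjacent. -/
private def auxG {n : ℕ} (G : SimpleGraph (Fin n)) [DecidableRel G.Adj] (t : ℕ) (x : Fin n) :
    SimpleGraph (Fin n) where
  Adj a b := a ≠ b ∧ ((t ≤ G.degree a ∧ t ≤ G.degree b ∧ G.Adj a b) ∨
      (t ≤ G.degree a ∧ ¬ t ≤ G.degree b) ∨ (¬ t ≤ G.degree a ∧ t ≤ G.degree b) ∨
      (¬ t ≤ G.degree a ∧ ¬ t ≤ G.degree b ∧ (a = x ∨ b = x)))
  symm := by
    constructor; rintro a b ⟨h1, h2⟩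
    refine ⟨h1.symm, ?_⟩
    have := G.adj_comm a b
    tauto
  loopless := ⟨fun a h => h.1 rfl⟩

private instance auxG.instDec {n : ℕ} (G : SimpleGraph (Fin n)) [DecidableRel G.Adj]
    (t : ℕ) (x : Fin n) : DecidableRel (auxG G t x).Adj := fun _ _ => by
  unfold auxG; exact instDecidableAnd

private lemma auxG_adj {n : ℕ} (G : SimpleGraph (Fin n)) [DecidableRel G.Adj]
    (t : ℕ) (x : Fin n) (a b : Fin n) :
    (auxG G t x).Adj a b ↔ a ≠ b ∧ ((t ≤ G.degree a ∧ t ≤ G.degree b ∧ G.Adj a b) ∨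
      (t ≤ G.degree a ∧ ¬ t ≤ G.degree b) ∨ (¬ t ≤ G.degree a ∧ t ≤ G.degree b) ∨
      (¬ t ≤ G.degree a ∧ ¬ t ≤ G.degree b ∧ (a = x ∨ b = x))) := Iff.rfl

/-- A `K_{r+1}`-free graph maximizing the number of stars `S_t` is complete
multipartite, i.e., non-adjacency is an equivalence relation. -/
theorem optimal_graphs_complete_multipartite (r t n : ℕ) (hr : 1 ≤ r) (ht : 2 ≤ t)
    (hn : t + 1 ≤ n) (G : SimpleGraph (Fin n)) [DecidableRel G.Adj]
    (hfree : G.CliqueFree (r + 1))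
    (hmax : ∀ (H : SimpleGraph (Fin n)) [DecidableRel H.Adj], H.CliqueFree (r + 1) →
      ∑ v, (H.degree v).choose t ≤ ∑ v, (G.degree v).choose t) :
    Equivalence (fun x y : Fin n => ¬ G.Adj x y) := by
  refine ⟨fun x => G.irrefl, fun {x y} h hadj => h hadj.symm, ?_⟩
  intro x y z hxy hyz hxz'
  by_cases hxyeq : x = y
  · subst hxyeq; exact hyz hxz'
  by_cases hyzeq : y = z
  · subst hyzeq; exact hxy hxz'
  -- hxz' : G.Adj x z, goal False
  have hxz : G.Adj x z := hxz'
  have hK1 := key ht G hfree hmax hxyeq hxy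
  have hzy : ¬ G.Adj z y := fun h => hyz h.symm
  have hzyne : z ≠ y := fun h => hyzeq h.symm
  have hK2 := key ht G hfree hmax hzyne hzy
  have hdz : G.degree z + 2 ≤ t := hK1.2 z hxz hyz
  have hdx : G.degree x + 2 ≤ t := hK2.2 x hxz.symm (fun h => hxy h.symm)
  have hilo : ∀ a b : Fin n, t ≤ G.degree a → G.degree b < t → a ≠ b → G.Adj a b := by
    intro a b hda hdb hab
    by_contra hnadj
    have h1 := (key ht G hfree hmax hab hnadj).1
    have h2 : 0 < (G.degree a).choose t := Nat.choose_pos hda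
    have h3 : (G.degree b).choose t = 0 := Nat.choose_eq_zero_of_lt hdb
    omega
  classical
  set Hi : Finset (Fin n) := Finset.univ.filter (fun v => t ≤ G.degree v) with hHidef
  have hmemHi : ∀ v, v ∈ Hi ↔ t ≤ G.degree v := by intro v; simp [hHidef]
  have hxHi : x ∉ Hi := by rw [hmemHi]; omega
  have hzHi : z ∉ Hi := by rw [hmemHi]; omega
  have hsub : insert z Hi ⊆ G.neighborFinset x := by
    intro v hv
    rcases Finset.mem_insert.1 hv with h | h
    · subst h; exact (G.mem_neighborFinset x v).2 hxz
    · exact (G.mem_neighborFinset x v).2 ((hilo v x ((hmemHi v).1 h) (by omega)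
        (fun he => hxHi (he ▸ h))).symm)
  have hcard : Hi.card + 1 ≤ G.degree x := by
    have h1 := Finset.card_le_card hsub
    rw [Finset.card_insert_of_notMem hzHi] at h1
    exact h1
  -- the improved graph is clique-free
  have hHfree : (auxG G t x).CliqueFree (r + 1) := by
    intro C hC
    set C0 := C.filter (fun v => t ≤ G.degree v) with hC0def
    have hC0mem : ∀ c, c ∈ C0 → t ≤ G.degree c := fun c hc => (Finset.mem_filter.1 hc).2
    have hlow1 : ((C.filter (fun v => ¬ t ≤ G.degree v)).erase x).card ≤ 1 := by
      rw [Finset.card_le_one]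
      intro a ha b hb
      by_contra hab
      obtain ⟨hax, haC⟩ := Finset.mem_erase.1 ha
      obtain ⟨hbx, hbC⟩ := Finset.mem_erase.1 hb
      obtain ⟨haC', hda⟩ := Finset.mem_filter.1 haC
      obtain ⟨hbC', hdb⟩ := Finset.mem_filter.1 hbC
      have hadj := (auxG_adj G t x a b).1
        (hC.1 (Finset.mem_coe.2 haC') (Finset.mem_coe.2 hbC') hab)
      rcases hadj.2 with h | h | h | h
      · exact hda h.1
      · exact hda h.1
      · exact hdb h.2
      · rcases h.2.2 with h' | h'
        · exact hax h'
        · exact hbx h'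
    have hlow : (C.filter (fun v => ¬ t ≤ G.degree v)).card ≤ 2 := by
      have h2 := Finset.pred_card_le_card_erase
        (s := C.filter (fun v => ¬ t ≤ G.degree v)) (a := x)
      omega
    have hsplitC : C0.card + (C.filter (fun v => ¬ t ≤ G.degree v)).card = C.card := by
      rw [hC0def]
      exact Finset.card_filter_add_card_filter_not (fun v => t ≤ G.degree v)
    have hxC0 : x ∉ insert z C0 := by
      simp only [Finset.mem_insert]
      rintro (h | h)
      · exact G.ne_of_adj hxz h
      · have := hC0mem x h; omega
    have hzC0 : z ∉ C0 := fun h => by have := hC0mem z h; omega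
    have hC0x : ∀ c, c ∈ C0 → G.Adj c x := fun c hc =>
      hilo c x (hC0mem c hc) (by omega) (fun he => by have := hC0mem c hc; rw [he] at this; omega)
    have hC0z : ∀ c, c ∈ C0 → G.Adj c z := fun c hc =>
      hilo c z (hC0mem c hc) (by omega) (fun he => by have := hC0mem c hc; rw [he] at this; omega)
    have hC0C0 : ∀ a b : Fin n, a ∈ C0 → b ∈ C0 → a ≠ b → G.Adj a b := by
      intro a b ha hb hab
      have hadj := (auxG_adj G t x a b).1
        (hC.1 (Finset.mem_coe.2 (Finset.filter_subset _ _ ha))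
          (Finset.mem_coe.2 (Finset.filter_subset _ _ hb)) hab)
      have hda := hC0mem a ha
      have hdb := hC0mem b hb
      rcases hadj.2 with h | h | h | h
      · exact h.2.2
      · exact absurd hdb h.2
      · exact absurd hda h.1
      · exact absurd hda h.1
    have hclq : G.IsClique ↑(insert x (insert z C0)) := by
      intro a ha b hb hab
      simp only [Finset.coe_insert, Set.mem_insert_iff, Finset.mem_coe] at ha hb
      rcases ha with rfl | rfl | ha <;> rcases hb with rfl | rfl | hb
      · exact absurd rfl hab
      · exact hxz
      · exact (hC0x b hb).symm
      · exact hxz.symm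
      · exact absurd rfl hab
      · exact (hC0z b hb).symm
      · exact hC0x a ha
      · exact hC0z a ha
      · exact hC0C0 a b ha hb hab
    have hcardK : (insert x (insert z C0)).card = C0.card + 2 := by
      rw [Finset.card_insert_of_notMem hxC0, Finset.card_insert_of_notMem hzC0]
    have hge : r + 1 ≤ (insert x (insert z C0)).card := by
      have hCcard := hC.2
      omega
    exact (hfree.mono hge) (insert x (insert z C0)) ⟨hclq, rfl⟩
  -- degree of x in the improved graph
  have hdegx : (auxG G t x).degree x = n - 1 := by
    have hnf : (auxG G t x).neighborFinset x = Finset.univ.erase x := by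
      ext v
      simp only [mem_neighborFinset, Finset.mem_erase, Finset.mem_univ, and_true]
      rw [auxG_adj]
      constructor
      · rintro ⟨h1, _⟩
        exact h1.symm
      · intro hvx
        refine ⟨Ne.symm hvx, ?_⟩
        have hx' : ¬ t ≤ G.degree x := by omega
        by_cases hv : t ≤ G.degree v
        · exact Or.inr (Or.inr (Or.inl ⟨hx', hv⟩))
        · exact Or.inr (Or.inr (Or.inr ⟨hx', hv, Or.inl rfl⟩))
    unfold SimpleGraph.degree
    rw [hnf, Finset.card_erase_of_mem (Finset.mem_univ x), Finset.card_univ, Fintype.card_fin]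
  -- degrees of high vertices are unchanged
  have hdeghi : ∀ v ∈ Hi, (auxG G t x).degree v = G.degree v := by
    intro v hv
    have hv' : t ≤ G.degree v := (hmemHi v).1 hv
    unfold SimpleGraph.degree
    congr 1
    ext b
    simp only [mem_neighborFinset]
    rw [auxG_adj]
    constructor
    · rintro ⟨h1, h2⟩
      rcases h2 with h | h | h | h
      · exact h.2.2
      · exact hilo v b hv' (by omega) h1
      · exact absurd hv' h.1
      · exact absurd hv' h.1
    · intro hadj
      refine ⟨G.ne_of_adj hadj, ?_⟩
      by_cases hb : t ≤ G.degree b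
      · exact Or.inl ⟨hv', hb, hadj⟩
      · exact Or.inr (Or.inl ⟨hv', hb⟩)
  -- sum comparison
  have hSG : ∑ v, (G.degree v).choose t = ∑ v ∈ Hi, (G.degree v).choose t := by
    symm
    apply Finset.sum_subset (Finset.subset_univ Hi)
    intro v _ hv
    rw [hmemHi] at hv
    exact Nat.choose_eq_zero_of_lt (by omega)
  have hSH : ∑ v ∈ Hi, (G.degree v).choose t + (n - 1).choose t
      ≤ ∑ v, ((auxG G t x).degree v).choose t := by
    have h1 : ∑ v ∈ insert x Hi, ((auxG G t x).degree v).choose t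
        ≤ ∑ v, ((auxG G t x).degree v).choose t :=
      Finset.sum_le_sum_of_subset (Finset.subset_univ _)
    rw [Finset.sum_insert hxHi, hdegx] at h1
    have h2 : ∑ v ∈ Hi, ((auxG G t x).degree v).choose t
        = ∑ v ∈ Hi, (G.degree v).choose t :=
      Finset.sum_congr rfl (fun v hv => by rw [hdeghi v hv])
    omega
  have hpos : 0 < (n - 1).choose t := Nat.choose_pos (by omega)
  have hfin := hmax (auxG G t x) hHfree
  omega
end

section
/- Let t ≥ 2 and r ≥ 2 be integers and let g(ρ) = (1−ρ)^{t−1}(1 − (t+1)ρ). Suppose ρ₁, …, ρ_r are real numbers with 0 < ρᵢ < 1 for all i, Σᵢ ρᵢ = 1, and there exists λ ∈ ℝ with g(ρᵢ) = λ for all i. Then either ρᵢ = 1/r for all i, or else λ ≤ 0 and there exist real numbers α, β with α < 2/(t+1) < β, g(α) = λ = g(β), and each ρᵢ equal to α or to β. -/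
/-- `g` is the derivative of `ρ ↦ ρ(1-ρ)^t`. -/
noncomputable def gfun (t : ℕ) (ρ : ℝ) : ℝ := (1 - ρ) ^ (t - 1) * (1 - ((t : ℝ) + 1) * ρ)

lemma gfun_hasDerivAt (t : ℕ) (ht : 2 ≤ t) (x : ℝ) :
    HasDerivAt (gfun t) ((t : ℝ) * (1 - x) ^ (t - 2) * (((t : ℝ) + 1) * x - 2)) x := by
  have h1 : HasDerivAt (fun y : ℝ => 1 - y) (-1) x := by
    simpa using (hasDerivAt_id x).const_sub 1
  have h2 := h1.pow (t - 1)
  have h3 : HasDerivAt (fun y : ℝ => 1 - ((t : ℝ) + 1) * y) (-((t : ℝ) + 1)) x := by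
    simpa using ((hasDerivAt_id x).const_mul ((t : ℝ) + 1)).const_sub 1
  have h4 := h2.mul h3
  convert h4 using 1
  case e'_4 => rfl
  case e'_5 => rfl
  case e'_8 => rfl
  have ht1 : t - 1 - 1 = t - 2 := by omega
  have hc : ((t - 1 : ℕ) : ℝ) = (t : ℝ) - 1 := by
    have h : 1 ≤ t := by omega
    push_cast [h]; ring
  have hpow : (1 - x) ^ (t - 1) = (1 - x) ^ (t - 2) * (1 - x) := by
    rw [← pow_succ]; congr 1; omega
  simp only [Pi.pow_apply]
  rw [ht1, hc, hpow]; ring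

lemma gfun_cont (t : ℕ) : Continuous (gfun t) := by
  unfold gfun; fun_prop

lemma c_lt_one (t : ℕ) (ht : 2 ≤ t) : 2 / ((t : ℝ) + 1) < 1 := by
  have h3 : (3 : ℝ) ≤ (t : ℝ) + 1 := by
    have : (2 : ℝ) ≤ (t : ℝ) := by exact_mod_cast ht
    linarith
  rw [div_lt_one (by linarith)]; linarith

lemma gfun_anti (t : ℕ) (ht : 2 ≤ t) :
    StrictAntiOn (gfun t) (Set.Icc 0 (2 / ((t : ℝ) + 1))) := by
  have htpos : (0 : ℝ) < (t : ℝ) + 1 := by positivity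
  apply strictAntiOn_of_deriv_neg (convex_Icc _ _) (gfun_cont t).continuousOn
  intro x hx
  rw [interior_Icc] at hx
  rw [(gfun_hasDerivAt t ht x).deriv]
  have hx1 : x < 1 := lt_trans hx.2 (c_lt_one t ht)
  have hpow : (0 : ℝ) < (1 - x) ^ (t - 2) := pow_pos (by linarith) _
  have htr : (0 : ℝ) < (t : ℝ) := by
    have : (2 : ℝ) ≤ (t : ℝ) := by exact_mod_cast ht
    linarith
  have hneg : ((t : ℝ) + 1) * x - 2 < 0 := by
    have := hx.2
    rw [lt_div_iff₀ htpos] at this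
    linarith
  have := mul_pos htr hpow
  nlinarith

lemma gfun_mono (t : ℕ) (ht : 2 ≤ t) :
    StrictMonoOn (gfun t) (Set.Icc (2 / ((t : ℝ) + 1)) 1) := by
  have htpos : (0 : ℝ) < (t : ℝ) + 1 := by positivity
  apply strictMonoOn_of_deriv_pos (convex_Icc _ _) (gfun_cont t).continuousOn
  intro x hx
  rw [interior_Icc] at hx
  rw [(gfun_hasDerivAt t ht x).deriv]
  have hpow : (0 : ℝ) < (1 - x) ^ (t - 2) := pow_pos (by linarith [hx.2]) _
  have htr : (0 : ℝ) < (t : ℝ) := by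
    have : (2 : ℝ) ≤ (t : ℝ) := by exact_mod_cast ht
    linarith
  have hpos : 0 < ((t : ℝ) + 1) * x - 2 := by
    have := hx.1
    rw [div_lt_iff₀ htpos] at this
    linarith
  have := mul_pos htr hpow
  nlinarith

/-- Two distinct points in (0,1) with the same `gfun` value straddle `2/(t+1)`. -/
lemma straddle (t : ℕ) (ht : 2 ≤ t) {x y : ℝ} (hx0 : 0 < x) (hy1 : y < 1)
    (hxy : x < y) (hg : gfun t x = gfun t y) :
    x < 2 / ((t : ℝ) + 1) ∧ 2 / ((t : ℝ) + 1) < y := by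
  set c := 2 / ((t : ℝ) + 1) with hc
  constructor
  · by_contra h
    push_neg at h
    have hxm : x ∈ Set.Icc c 1 := ⟨h, le_of_lt (lt_trans hxy hy1)⟩
    have hym : y ∈ Set.Icc c 1 := ⟨le_trans h (le_of_lt hxy), le_of_lt hy1⟩
    exact absurd hg (ne_of_lt (gfun_mono t ht hxm hym hxy))
  · by_contra h
    push_neg at h
    have hxm : x ∈ Set.Icc (0:ℝ) c := ⟨le_of_lt hx0, le_of_lt (lt_of_lt_of_le hxy h)⟩
    have hym : y ∈ Set.Icc (0:ℝ) c := ⟨le_of_lt (lt_trans hx0 hxy), h⟩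
    exact absurd hg (ne_of_gt (gfun_anti t ht hxm hym hxy))

/-- Corollary 3.3: interior critical points are either the Turán solution or a
skew solution. -/
theorem interior_critical_points (t r : ℕ) (ht : 2 ≤ t) (hr : 2 ≤ r)
    (ρ : Fin r → ℝ) (h0 : ∀ i, 0 < ρ i) (h1 : ∀ i, ρ i < 1)
    (hsum : ∑ i, ρ i = 1) (l : ℝ) (hl : ∀ i, gfun t (ρ i) = l) :
    (∀ i, ρ i = 1 / (r : ℝ)) ∨
      (l ≤ 0 ∧ ∃ α β : ℝ, α < 2 / ((t : ℝ) + 1) ∧ 2 / ((t : ℝ) + 1) < β ∧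
        gfun t α = l ∧ gfun t β = l ∧ ∀ i, ρ i = α ∨ ρ i = β) := by
  have htpos : (0 : ℝ) < (t : ℝ) + 1 := by positivity
  by_cases hall : ∀ i j, ρ i = ρ j
  · left
    have hrpos : 0 < r := by omega
    have i0 : Fin r := ⟨0, hrpos⟩
    intro i
    have heq : ∀ j, ρ j = ρ i0 := fun j => hall j i0
    have : ∑ j, ρ j = (r : ℝ) * ρ i0 := by
      rw [Finset.sum_congr rfl (fun j _ => heq j)]
      simp [mul_comm]
    rw [this] at hsum
    have hrne : (r : ℝ) ≠ 0 := by positivity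
    rw [heq i]
    field_simp
    linarith [hsum]
  · right
    push_neg at hall
    obtain ⟨i, j, hij⟩ := hall
    -- wlog ρ i < ρ j
    obtain ⟨a, b, hab⟩ : ∃ a b : Fin r, ρ a < ρ b := by
      rcases lt_or_gt_of_ne hij with h | h
      · exact ⟨i, j, h⟩
      · exact ⟨j, i, h⟩
    set α := ρ a
    set β := ρ b
    have hg : gfun t α = gfun t β := by rw [hl a, hl b]
    obtain ⟨hα, hβ⟩ := straddle t ht (h0 a) (h1 b) hab hg
    have hl0 : l ≤ 0 := by
      rw [← hl b]
      have h1b : (0:ℝ) < (1 - β) ^ (t - 1) := pow_pos (by linarith [h1 b]) _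
      have : 1 - ((t : ℝ) + 1) * β < 0 := by
        have := hβ
        rw [div_lt_iff₀ htpos] at this
        linarith
      have := mul_neg_of_pos_of_neg h1b this
      unfold gfun
      linarith
    refine ⟨hl0, α, β, hα, hβ, hl a, hl b, fun k => ?_⟩
    rcases lt_trichotomy (ρ k) α with h | h | h
    · exfalso
      have hgk : gfun t (ρ k) = gfun t α := by rw [hl k, hl a]
      have := (straddle t ht (h0 k) (h1 a) h hgk).2
      linarith
    · exact Or.inl h
    rcases lt_trichotomy (ρ k) β with h' | h' | h'
    · exfalso
      have hg1 : gfun t α = gfun t (ρ k) := by rw [hl k, hl a]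
      have hg2 : gfun t (ρ k) = gfun t β := by rw [hl k, hl b]
      have c1 := (straddle t ht (h0 a) (h1 k) h hg1).2
      have c2 := (straddle t ht (h0 k) (h1 b) h' hg2).1
      linarith
    · exact Or.inr h'
    · exfalso
      have hgk : gfun t β = gfun t (ρ k) := by rw [hl k, hl b]
      have := (straddle t ht (h0 b) (h1 k) h' hgk).1
      linarith
end
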